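/- arXiv:1602.02915 — 6 statements merged into one kernel-verified Lean document; each statement's English description precedes it below -/
import Mathlib

section
/- Let f_i : ℝ^n → (−∞,∞], 1 ≤ i ≤ r, be proper closed functions, let f := min_{1≤i≤r} f_i, suppose f is continuous on dom ∂f, and let x̄ ∈ dom ∂f ∩ (⋂_{i∈I(x̄)} dom ∂f_i), where I(x̄) := {i : f_i(x̄) = f(x̄)}. Suppose each f_i with i ∈ I(x̄) satisfies the KL property at x̄ with exponent α_i ∈ [0,1). Then f satisfies the KL property at x̄ with exponent α = max{α_i : i ∈ I(x̄)}. -/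
open Filter Topology Metric Set
open scoped RealInnerProductSpace

noncomputable section

variable {E : Type*} [NormedAddCommGroup E] [InnerProductSpace ℝ E]

/-- The effective domain of an extended-real-valued function. -/
def edomain (f : E → EReal) : Set E := {x | f x < ⊤}

/-- A proper function: never `⊥` and not identically `⊤`. -/
def ProperFn (f : E → EReal) : Prop := (∀ x, f x ≠ ⊥) ∧ ∃ x, f x < ⊤

/-- The regular (Fréchet) subdifferential. -/
def regSubdiff (f : E → EReal) (x : E) : Set E :=
  {v | f x < ⊤ ∧ ∀ ε : ℝ, 0 < ε →
    ∀ᶠ z in 𝓝 x, f x + ((⟪v, z - x⟫ - ε * ‖z - x‖ : ℝ) : EReal) ≤ f z}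

/-- The limiting (Mordukhovich) subdifferential. -/
def limSubdiff (f : E → EReal) (x : E) : Set E :=
  {v | f x < ⊤ ∧ ∃ (xs vs : ℕ → E),
    Tendsto xs atTop (𝓝 x) ∧ Tendsto (fun t => f (xs t)) atTop (𝓝 (f x)) ∧
    Tendsto vs atTop (𝓝 v) ∧ ∀ t, vs t ∈ regSubdiff f (xs t)}

/-- The domain of the limiting subdifferential. -/
def subdiffDom (f : E → EReal) : Set E := {x | (limSubdiff f x).Nonempty}

/-- `f` satisfies the KL property at `xbar` with exponent `α`. -/
def KLAt (f : E → EReal) (xbar : E) (α : ℝ) : Prop :=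
  ∃ c > (0:ℝ), ∃ ε > (0:ℝ), ∃ ν : EReal, 0 < ν ∧
    ∀ x : E, ‖x - xbar‖ ≤ ε → f xbar < f x → f x < f xbar + ν →
      ENNReal.ofReal (c * (f x - f xbar).toReal ^ α) ≤ EMetric.infEdist 0 (limSubdiff f x)

/-- `f` is a KL function with exponent `α`. -/
def IsKL (f : E → EReal) (α : ℝ) : Prop := ∀ x ∈ subdiffDom f, KLAt f x α

open Classical in
/-- Indicator function of a set. -/
def indic (C : Set E) : E → EReal := fun x => if x ∈ C then 0 else ⊤

/-- `w` is the proximal point of `P` at `z`. -/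
def IsProxPt (P : E → EReal) (z w : E) : Prop :=
  ∀ y : E, P w + ((1/2 * ‖w - z‖^2 : ℝ) : EReal) ≤ P y + ((1/2 * ‖y - z‖^2 : ℝ) : EReal)

/-- A polyhedral set: a finite intersection of closed half-spaces. -/
def IsPolyhedralSet {F : Type*} [AddCommGroup F] [Module ℝ F] (S : Set F) : Prop :=
  ∃ (k : ℕ) (φ : Fin k → (F →ₗ[ℝ] ℝ)) (b : Fin k → ℝ), S = {x | ∀ i, φ i x ≤ b i}

/-- A proper closed polyhedral function: proper, closed, with polyhedral epigraph. -/
def IsPolyhedralFn (P : E → EReal) : Prop :=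
  ProperFn P ∧ LowerSemicontinuous P ∧
    IsPolyhedralSet {p : E × ℝ | P p.1 ≤ (p.2 : EReal)}

/-- Convexity of an extended-real-valued function, via convexity of its epigraph. -/
def EConvex (f : E → EReal) : Prop := Convex ℝ {p : E × ℝ | f p.1 ≤ (p.2 : EReal)}


section KLaux

variable {E : Type*} [NormedAddCommGroup E] [InnerProductSpace ℝ E]

lemma regSubdiff_subset_of_eq (g f : E → EReal) (hle : ∀ z, f z ≤ g z) (w : E)
    (heq : g w = f w) : regSubdiff f w ⊆ regSubdiff g w := by
  rintro v ⟨h1, h2⟩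
  refine ⟨by rw [heq]; exact h1, fun ε hε => (h2 ε hε).mono fun z hz => ?_⟩
  rw [heq]; exact hz.trans (hle z)

lemma limSubdiff_min_subset {r : ℕ} (hr : 0 < r) (g : Fin r → E → EReal)
    (hlsc : ∀ i, LowerSemicontinuous (g i)) (f : E → EReal) (hf : ∀ x, f x = ⨅ i, g i x)
    (x v : E) (hv : v ∈ limSubdiff f x) : ∃ i, g i x = f x ∧ v ∈ limSubdiff (g i) x := by
  haveI : Nonempty (Fin r) := Fin.pos_iff_nonempty.mp hr
  obtain ⟨hfx, xs, vs, hxs, hfxs, hvs, hreg⟩ := hv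
  have hle : ∀ i w, f w ≤ g i w := fun i w => (hf w) ▸ iInf_le _ i
  have hmin : ∀ w, ∃ i, g i w = f w := by
    intro w
    obtain ⟨i, hi⟩ := Finite.exists_min fun i => g i w
    exact ⟨i, by rw [hf]; exact le_antisymm (le_iInf hi) (iInf_le _ i)⟩
  choose idx hidx using fun t => hmin (xs t)
  obtain ⟨i, hfib⟩ := Finite.exists_infinite_fiber idx
  have hfreq : ∃ᶠ t in atTop, idx t = i :=
    Nat.frequently_atTop_iff_infinite.mpr (Set.infinite_coe_iff.mp hfib)
  obtain ⟨φ, hφ, hφi⟩ := extraction_of_frequently_atTop hfreq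
  have hxsφ : Tendsto (xs ∘ φ) atTop (𝓝 x) := hxs.comp hφ.tendsto_atTop
  have hgval : ∀ t, g i (xs (φ t)) = f (xs (φ t)) := fun t => by
    rw [← hφi t]; exact hidx (φ t)
  have hgφ : Tendsto (fun t => g i (xs (φ t))) atTop (𝓝 (f x)) :=
    (hfxs.comp hφ.tendsto_atTop).congr fun t => (hgval t).symm
  have hgeq : g i x = f x := by
    rcases eq_or_lt_of_le (hle i x) with h | h
    · exact h.symm
    · exfalso
      obtain ⟨y, hy1, hy2⟩ := exists_between h
      have h1 : ∀ᶠ t in atTop, y < g i (xs (φ t)) := hxsφ.eventually (hlsc i x y hy2)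
      have h2 : ∀ᶠ t in atTop, g i (xs (φ t)) < y := hgφ.eventually_lt_const hy1
      obtain ⟨t, ht1, ht2⟩ := (h1.and h2).exists
      exact absurd (ht1.trans ht2) (lt_irrefl y)
  refine ⟨i, hgeq, by rw [hgeq]; exact hfx, xs ∘ φ, vs ∘ φ, hxsφ, ?_, hvs.comp hφ.tendsto_atTop,
    fun t => regSubdiff_subset_of_eq (g i) f (hle i) (xs (φ t)) (hgval t) (hreg (φ t))⟩
  rw [hgeq]; exact hgφ

end KLaux

/-- KL exponent for the minimum of finitely many KL functions, at a point. -/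
theorem stmt_1 {n r : ℕ} (hr : 0 < r) (g : Fin r → (EuclideanSpace ℝ (Fin n) → EReal))
    (hproper : ∀ i, ProperFn (g i)) (hclosed : ∀ i, LowerSemicontinuous (g i))
    (f : EuclideanSpace ℝ (Fin n) → EReal) (hf : ∀ x, f x = ⨅ i, g i x)
    (hcont : ContinuousOn f (subdiffDom f))
    (xbar : EuclideanSpace ℝ (Fin n)) (hxbar : xbar ∈ subdiffDom f)
    (I : Set (Fin r)) (hI : I = {i | g i xbar = f xbar})
    (hxbar' : ∀ i ∈ I, xbar ∈ subdiffDom (g i))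
    (α : Fin r → ℝ) (hα : ∀ i ∈ I, 0 ≤ α i ∧ α i < 1)
    (hKL : ∀ i ∈ I, KLAt (g i) xbar (α i))
    (αmax : ℝ) (hmax1 : ∃ i ∈ I, αmax = α i) (hmax2 : ∀ i ∈ I, α i ≤ αmax) :
    KLAt f xbar αmax := by
  haveI : Nonempty (Fin r) := Fin.pos_iff_nonempty.mp hr
  obtain ⟨v0, hv0⟩ := hxbar
  have hfxbar_top : f xbar < ⊤ := hv0.1
  have hle : ∀ i x, f x ≤ g i x := fun i x => (hf x) ▸ iInf_le _ i
  have hmin : ∀ w, ∃ i, g i w = f w := by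
    intro w
    obtain ⟨i, hi⟩ := Finite.exists_min fun i => g i w
    exact ⟨i, by rw [hf]; exact le_antisymm (le_iInf hi) (iInf_le _ i)⟩
  have hfbot : ∀ x, f x ≠ ⊥ := by
    intro x
    obtain ⟨i, hi⟩ := hmin x
    rw [← hi]; exact (hproper i).1 _
  set a := (f xbar).toReal with ha
  have hfa : f xbar = (a : EReal) := (EReal.coe_toReal hfxbar_top.ne (hfbot xbar)).symm
  -- per-index data
  have H : ∀ i : Fin r, ∃ ci εi δi : ℝ, 0 < ci ∧ 0 < εi ∧ 0 < δi ∧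
      (i ∈ I → ∀ x, ‖x - xbar‖ ≤ εi → g i xbar < g i x → g i x < g i xbar + (δi : EReal) →
        ENNReal.ofReal (ci * (g i x - g i xbar).toReal ^ α i) ≤
          EMetric.infEdist 0 (limSubdiff (g i) x)) ∧
      (i ∉ I → ∀ x, ‖x - xbar‖ ≤ εi → f xbar + (δi : EReal) < g i x) := by
    intro i
    by_cases hi : i ∈ I
    · obtain ⟨c, hc, ε, hε, ν, hν, hb⟩ := hKL i hi
      obtain ⟨ρ, hρ1, hρ2⟩ := EReal.lt_iff_exists_real_btwn.mp hν
      have hρ0 : (0:ℝ) < ρ := by exact_mod_cast hρ1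
      refine ⟨c, ε, ρ, hc, hε, hρ0,
        fun _ x hx h1 h2 => hb x hx h1 (h2.trans_le (add_le_add_right hρ2.le _)),
        fun h => absurd hi h⟩
    · have hne : g i xbar ≠ f xbar := by
        intro h; exact hi (by rw [hI]; exact h)
      have hlt : f xbar < g i xbar := lt_of_le_of_ne (hle i xbar) (fun h => hne h.symm)
      obtain ⟨q, hq1, hq2⟩ := EReal.lt_iff_exists_real_btwn.mp hlt
      have haq : a < q := by rw [hfa] at hq1; exact_mod_cast hq1
      have hev := hclosed i xbar (q : EReal) hq2
      rw [Metric.eventually_nhds_iff] at hev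
      obtain ⟨ε, hε, hball⟩ := hev
      refine ⟨1, ε/2, q - a, one_pos, by positivity, sub_pos.mpr haq,
        fun h => absurd h hi, fun _ x hx => ?_⟩
      have hdx : dist x xbar < ε := by
        rw [dist_eq_norm]; exact lt_of_le_of_lt hx (half_lt_self hε)
      calc f xbar + ((q - a : ℝ) : EReal) = ((a + (q - a) : ℝ) : EReal) := by
            rw [hfa, ← EReal.coe_add]
        _ = (q : EReal) := by norm_num
        _ < g i x := hball hdx
  choose c ε δ hc hε hδ hIn hOut using H
  have hune : (Finset.univ : Finset (Fin r)).Nonempty := Finset.univ_nonempty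
  set c0 := Finset.univ.inf' hune c with hc0
  set ε0 := Finset.univ.inf' hune ε with hε0
  set δ0 := Finset.univ.inf' hune δ with hδ0
  have hc0pos : 0 < c0 := (Finset.lt_inf'_iff hune).mpr fun i _ => hc i
  have hε0pos : 0 < ε0 := (Finset.lt_inf'_iff hune).mpr fun i _ => hε i
  have hδ0pos : 0 < δ0 := (Finset.lt_inf'_iff hune).mpr fun i _ => hδ i
  have hνpos : (0:ℝ) < min 1 δ0 := lt_min one_pos hδ0pos
  refine ⟨c0, hc0pos, ε0, hε0pos, ((min 1 δ0 : ℝ) : EReal), by exact_mod_cast hνpos, ?_⟩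
  intro x hx h1 h2
  have hfx_top : f x < ⊤ := lt_of_lt_of_le h2 (by rw [hfa, ← EReal.coe_add]; exact le_top)
  set b := (f x).toReal with hb
  have hfb : f x = (b : EReal) := (EReal.coe_toReal hfx_top.ne (hfbot x)).symm
  have hab : a < b := by rw [hfa, hfb] at h1; exact_mod_cast h1
  have hbu : b < a + min 1 δ0 := by
    rw [hfa, hfb, ← EReal.coe_add] at h2; exact_mod_cast h2
  have ht : (f x - f xbar).toReal = b - a := by
    rw [hfa, hfb, ← EReal.coe_sub, EReal.toReal_coe]
  have htpos : 0 < b - a := sub_pos.mpr hab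
  have htle1 : b - a ≤ 1 := by
    have : b - a < min 1 δ0 := by linarith
    exact le_of_lt (lt_of_lt_of_le this (min_le_left _ _))
  refine EMetric.le_infEdist.mpr ?_
  intro v hv
  obtain ⟨i, hgx, hvi⟩ := limSubdiff_min_subset hr g hclosed f hf x v hv
  have hεle : ‖x - xbar‖ ≤ ε i := hx.trans (Finset.inf'_le _ (Finset.mem_univ i))
  have hδle : ((min 1 δ0 : ℝ) : EReal) ≤ ((δ i : ℝ) : EReal) := by
    exact_mod_cast (min_le_right 1 δ0).trans (Finset.inf'_le _ (Finset.mem_univ i))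
  have hiI : i ∈ I := by
    by_contra hiN
    have hout := hOut i hiN x hεle
    have hin : g i x < f xbar + ((δ i : ℝ) : EReal) := by
      rw [hgx]; exact h2.trans_le (add_le_add_right hδle _)
    exact absurd (hout.trans hin) (lt_irrefl _)
  have hgxbar : g i xbar = f xbar := by
    have := hiI; rw [hI] at this; exact this
  have hbound := hIn i hiI x hεle (by rw [hgxbar, hgx]; exact h1)
    (by rw [hgxbar, hgx]; exact h2.trans_le (add_le_add_right hδle _))
  refine le_trans (ENNReal.ofReal_le_ofReal ?_)
    (hbound.trans (EMetric.infEdist_le_edist_of_mem hvi))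
  rw [hgx, hgxbar, ht]
  exact mul_le_mul (Finset.inf'_le _ (Finset.mem_univ i))
    (Real.rpow_le_rpow_of_exponent_ge htpos htle1 (hmax2 i hiI))
    (Real.rpow_nonneg htpos.le _) (hc i).le

end
end

section
/- Let f_i : ℝ^n → (−∞,∞], 1 ≤ i ≤ r, be proper closed functions with dom f_i = dom ∂f_i for all i, and let f := min_{1≤i≤r} f_i be continuous on dom ∂f. Suppose each f_i is a KL function with exponent α_i ∈ [0,1). Then f is a KL function with exponent α = max{α_i : 1 ≤ i ≤ r}. -/
open Filter Topology Metric Set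
open scoped RealInnerProductSpace

noncomputable section

variable {E : Type*} [NormedAddCommGroup E] [InnerProductSpace ℝ E]

lemma min_attained {r : ℕ} (hr : 0 < r) (h : Fin r → EReal) : ∃ i, h i = ⨅ j, h j := by
  haveI : Nonempty (Fin r) := Fin.pos_iff_nonempty.mp hr
  obtain ⟨i, hi⟩ := Finite.exists_min h
  exact ⟨i, le_antisymm (le_iInf hi) (iInf_le h i)⟩

lemma reg_subset (f g : E → EReal) (hle : ∀ z, f z ≤ g z) {x v : E}
    (hx : g x = f x) (hv : v ∈ regSubdiff f x) : v ∈ regSubdiff g x := by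
  obtain ⟨hfx, H⟩ := hv
  refine ⟨hx ▸ hfx, fun ε hε => ?_⟩
  filter_upwards [H ε hε] with z hz
  calc g x + ((⟪v, z - x⟫ - ε * ‖z - x‖ : ℝ) : EReal)
      = f x + ((⟪v, z - x⟫ - ε * ‖z - x‖ : ℝ) : EReal) := by rw [hx]
    _ ≤ f z := hz
    _ ≤ g z := hle z

lemma limSubdiff_subset {n r : ℕ} (hr : 0 < r)
    (g : Fin r → (EuclideanSpace ℝ (Fin n) → EReal))
    (hclosed : ∀ i, LowerSemicontinuous (g i))
    (f : EuclideanSpace ℝ (Fin n) → EReal) (hf : ∀ x, f x = ⨅ i, g i x)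
    {x v : EuclideanSpace ℝ (Fin n)} (hv : v ∈ limSubdiff f x) :
    ∃ i, g i x = f x ∧ v ∈ limSubdiff (g i) x := by
  obtain ⟨hfx, xs, vs, hxs, hfxs, hvs, hreg⟩ := hv
  have hle : ∀ i z, f z ≤ g i z := fun i z => (hf z) ▸ iInf_le (fun j => g j z) i
  have hmin := fun t => min_attained hr (fun j => g j (xs t))
  choose idx hidx using hmin
  have hidx' : ∀ t, g (idx t) (xs t) = f (xs t) := fun t => (hidx t).trans (hf (xs t)).symm
  obtain ⟨i, hi⟩ := Finite.exists_infinite_fiber idx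
  rw [Set.infinite_coe_iff] at hi
  have hfr : ∃ᶠ t in atTop, idx t = i := by
    rw [Filter.frequently_atTop]
    intro a
    obtain ⟨b, hb1, hb2⟩ := Set.not_subset.mp
      (fun h => hi (Set.Finite.subset (Set.finite_Iio a) h))
    exact ⟨b, Nat.le_of_not_lt hb2, hb1⟩
  obtain ⟨φ, hφ, hφi⟩ := Filter.extraction_of_frequently_atTop hfr
  have hxs' : Tendsto (fun t => xs (φ t)) atTop (𝓝 x) := hxs.comp hφ.tendsto_atTop
  have hvs' : Tendsto (fun t => vs (φ t)) atTop (𝓝 v) := hvs.comp hφ.tendsto_atTop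
  have hfxs' : Tendsto (fun t => f (xs (φ t))) atTop (𝓝 (f x)) := hfxs.comp hφ.tendsto_atTop
  have hgieq : ∀ t, g i (xs (φ t)) = f (xs (φ t)) := fun t => by
    rw [← hφi t]; exact hidx' (φ t)
  rcases eq_or_lt_of_le (hle i x) with heq | hlt
  · refine ⟨i, heq.symm, heq ▸ hfx, fun t => xs (φ t), fun t => vs (φ t), hxs', ?_, hvs', ?_⟩
    · have : (fun t => g i (xs (φ t))) = fun t => f (xs (φ t)) := funext fun t => hgieq t
      rw [this, ← heq]; exact hfxs'
    · exact fun t => reg_subset f (g i) (hle i) (hgieq t) (hreg (φ t))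
  · exfalso
    obtain ⟨m, hm1, hm2⟩ := exists_between hlt
    have hev := hclosed i x m hm2
    have hev2 : ∀ᶠ t in atTop, m ≤ f (xs (φ t)) := by
      filter_upwards [hxs'.eventually hev] with t ht
      rw [← hgieq t]; exact ht.le
    exact absurd (ge_of_tendsto hfxs' hev2) (not_le.mpr hm1)


/-- The minimum of finitely many KL functions with `dom f_i = dom ∂f_i`
is a KL function with the maximal exponent. -/
theorem stmt_2 {n r : ℕ} (hr : 0 < r) (g : Fin r → (EuclideanSpace ℝ (Fin n) → EReal))
    (hproper : ∀ i, ProperFn (g i)) (hclosed : ∀ i, LowerSemicontinuous (g i))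
    (hdom : ∀ i, edomain (g i) = subdiffDom (g i))
    (f : EuclideanSpace ℝ (Fin n) → EReal) (hf : ∀ x, f x = ⨅ i, g i x)
    (hcont : ContinuousOn f (subdiffDom f))
    (α : Fin r → ℝ) (hα : ∀ i, 0 ≤ α i ∧ α i < 1)
    (hKL : ∀ i, IsKL (g i) (α i))
    (αmax : ℝ) (hmax1 : ∃ i, αmax = α i) (hmax2 : ∀ i, α i ≤ αmax) :
    IsKL f αmax := by
  haveI : Nonempty (Fin r) := Fin.pos_iff_nonempty.mp hr
  intro xbar hxbar
  obtain ⟨v0, hv0⟩ := hxbar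
  have hfxb_top : f xbar < ⊤ := hv0.1
  have hfbot : ∀ x, f x ≠ ⊥ := fun x => by
    obtain ⟨i, hi⟩ := min_attained hr (fun j => g j x)
    rw [hf x, ← hi]; exact (hproper i).1 x
  set a := (f xbar).toReal with hadef
  have ha : f xbar = (a : EReal) := (EReal.coe_toReal hfxb_top.ne (hfbot xbar)).symm
  -- per-index data
  have hdata : ∀ i, ∃ (c ε : ℝ) (ν : EReal), 0 < c ∧ 0 < ε ∧ 0 < ν ∧
      ((g i xbar = f xbar ∧ ∀ x, ‖x - xbar‖ ≤ ε → g i xbar < g i x → g i x < g i xbar + ν →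
          ENNReal.ofReal (c * (g i x - g i xbar).toReal ^ (α i)) ≤
            EMetric.infEdist 0 (limSubdiff (g i) x))
        ∨ (∀ x, ‖x - xbar‖ ≤ ε → f xbar + ν ≤ g i x)) := by
    intro i
    have hle : f xbar ≤ g i xbar := (hf xbar) ▸ iInf_le (fun j => g j xbar) i
    rcases eq_or_lt_of_le hle with heq | hlt
    · have hx_dom : xbar ∈ subdiffDom (g i) := by
        rw [← hdom i]; exact show g i xbar < ⊤ from heq ▸ hfxb_top
      obtain ⟨c, hc, ε, hε, ν, hν, H⟩ := hKL i xbar hx_dom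
      exact ⟨c, ε, ν, hc, hε, hν, Or.inl ⟨heq.symm, H⟩⟩
    · obtain ⟨m, hm1, hm2⟩ := exists_between hlt
      have hmtop : m ≠ ⊤ := (lt_of_lt_of_le hm2 le_top).ne
      have hmbot : m ≠ ⊥ := (lt_of_le_of_lt bot_le hm1).ne'
      set b := m.toReal with hbdef
      have hb : m = (b : EReal) := (EReal.coe_toReal hmtop hmbot).symm
      have hab : a < b := by rw [ha, hb] at hm1; exact_mod_cast hm1
      have hev := hclosed i xbar m hm2
      rw [Metric.eventually_nhds_iff] at hev
      obtain ⟨δ, hδ, hball⟩ := hev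
      refine ⟨1, δ/2, (((b - a : ℝ)) : EReal), one_pos, by positivity, ?_, Or.inr ?_⟩
      · exact_mod_cast sub_pos.mpr hab
      · intro x hx
        have hdx : dist x xbar < δ := by rw [dist_eq_norm]; linarith
        have h1 : m < g i x := hball hdx
        have h2 : f xbar + (((b - a : ℝ)) : EReal) = m := by
          rw [ha, hb, ← EReal.coe_add]; norm_num
        rw [h2]; exact h1.le
  choose cc εε νν hcc hεε hνν hP using hdata
  set c0 : ℝ := Finset.univ.inf' Finset.univ_nonempty cc with hc0def
  set ε0 : ℝ := Finset.univ.inf' Finset.univ_nonempty εε with hε0def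
  set ν0 : EReal := min 1 (Finset.univ.inf' Finset.univ_nonempty νν) with hν0def
  refine ⟨c0, ?_, ε0, ?_, ν0, ?_, ?_⟩
  · exact (Finset.lt_inf'_iff _).mpr fun i _ => hcc i
  · exact (Finset.lt_inf'_iff _).mpr fun i _ => hεε i
  · exact lt_min one_pos ((Finset.lt_inf'_iff _).mpr fun i _ => hνν i)
  intro x hx1 hx2 hx3
  have hx3' : f x < f xbar + 1 :=
    lt_of_lt_of_le hx3 (add_le_add_right (min_le_left _ _) _)
  have heq1 : f xbar + 1 = (((a + 1 : ℝ)) : EReal) := by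
    rw [ha, EReal.coe_add, EReal.coe_one]
  rw [heq1] at hx3'
  have hfx_top : f x ≠ ⊤ := (hx3'.trans (EReal.coe_lt_top _)).ne
  set b := (f x).toReal with hbdef
  have hbE : f x = (b : EReal) := (EReal.coe_toReal hfx_top (hfbot x)).symm
  have hab : a < b := by rw [ha, hbE] at hx2; exact_mod_cast hx2
  have hb1 : b - a < 1 := by
    rw [hbE] at hx3'
    have : b < a + 1 := by exact_mod_cast hx3'
    linarith
  have ht : (f x - f xbar).toReal = b - a := by
    rw [ha, hbE, ← EReal.coe_sub, EReal.toReal_coe]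
  refine EMetric.le_infEdist.mpr ?_
  intro v hv
  obtain ⟨i, hgi, hvi⟩ := limSubdiff_subset hr g hclosed f hf hv
  have hνi : ν0 ≤ νν i :=
    le_trans (min_le_right _ _) (Finset.inf'_le _ (Finset.mem_univ i))
  rcases hP i with ⟨hact, Hi⟩ | Hin
  · have h1 : ‖x - xbar‖ ≤ εε i :=
      le_trans hx1 (Finset.inf'_le _ (Finset.mem_univ i))
    have h2 : g i xbar < g i x := by rw [hact, hgi]; exact hx2
    have h3 : g i x < g i xbar + νν i := by
      rw [hact, hgi]; exact lt_of_lt_of_le hx3 (add_le_add_right hνi _)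
    have hbound := Hi x h1 h2 h3
    rw [hgi, hact, ht] at hbound
    have hpos : 0 < b - a := sub_pos.mpr hab
    have hmono : (b - a) ^ αmax ≤ (b - a) ^ (α i) :=
      Real.rpow_le_rpow_of_exponent_ge hpos hb1.le (hmax2 i)
    have hc0i : c0 ≤ cc i := Finset.inf'_le _ (Finset.mem_univ i)
    have hc0pos : (0:ℝ) < c0 := (Finset.lt_inf'_iff _).mpr fun j _ => hcc j
    calc ENNReal.ofReal (c0 * (f x - f xbar).toReal ^ αmax)
        = ENNReal.ofReal (c0 * (b - a) ^ αmax) := by rw [ht]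
      _ ≤ ENNReal.ofReal (cc i * (b - a) ^ (α i)) := by
          apply ENNReal.ofReal_le_ofReal
          exact mul_le_mul hc0i hmono (Real.rpow_nonneg hpos.le _) (hcc i).le
      _ ≤ EMetric.infEdist 0 (limSubdiff (g i) x) := hbound
      _ ≤ edist 0 v := EMetric.infEdist_le_edist_of_mem hvi
  · exfalso
    have h1 : ‖x - xbar‖ ≤ εε i :=
      le_trans hx1 (Finset.inf'_le _ (Finset.mem_univ i))
    have := Hin x h1
    rw [hgi] at this
    exact absurd (lt_of_lt_of_le hx3 (le_trans (add_le_add_right hνi _) this)) (lt_irrefl _)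

end
end

section
/- Let n_1,…,n_m ∈ ℕ with n_1 + … + n_m = n, and let f(x) = Σ_{i=1}^m f_i(x_i) for x = (x_1,…,x_m) ∈ ℝ^n with x_i ∈ ℝ^{n_i}, where each f_i : ℝ^{n_i} → (−∞,∞] is a proper closed function. Suppose each f_i is a KL function with exponent α_i ∈ (0,1) and each f_i is continuous on dom ∂f_i. Then f is a KL function with exponent α = max{α_i : 1 ≤ i ≤ m}. -/
open Filter Topology Metric Set
open scoped RealInnerProductSpace

noncomputable section

variable {E : Type*} [NormedAddCommGroup E] [InnerProductSpace ℝ E]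

/-! ### Auxiliary lemmas -/

lemma ereal_sum_ne_bot {ι : Type*} (s : Finset ι) (F : ι → EReal)
    (h : ∀ i ∈ s, F i ≠ ⊥) : ∑ i ∈ s, F i ≠ ⊥ := by
  classical
  induction s using Finset.induction with
  | empty => simp
  | insert _ _ hx ih =>
    rename_i a t
    rw [Finset.sum_insert hx]
    simp only [ne_eq, EReal.add_eq_bot_iff, not_or]
    exact ⟨h a (Finset.mem_insert_self a t), ih fun i hi => h i (Finset.mem_insert_of_mem hi)⟩

lemma ereal_sum_lt_top {ι : Type*} (s : Finset ι) (F : ι → EReal)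
    (h : ∀ i ∈ s, F i ≠ ⊤) : ∑ i ∈ s, F i < ⊤ := by
  classical
  induction s using Finset.induction with
  | empty => simp
  | insert _ _ hx ih =>
    rename_i a t
    rw [Finset.sum_insert hx]
    exact EReal.add_lt_top (h a (Finset.mem_insert_self a t))
      (LT.lt.ne (ih fun i hi => h i (Finset.mem_insert_of_mem hi)))

lemma ereal_coe_sum {ι : Type*} (s : Finset ι) (F : ι → ℝ) :
    ((∑ i ∈ s, F i : ℝ) : EReal) = ∑ i ∈ s, (F i : EReal) := by
  classical
  induction s using Finset.induction with
  | empty => simp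
  | insert _ _ hx ih =>
    rename_i a t
    simp [Finset.sum_insert hx, ih]

lemma ereal_term_lt_top {ι : Type*} (s : Finset ι) (F : ι → EReal)
    (hb : ∀ i ∈ s, F i ≠ ⊥) (h : ∑ i ∈ s, F i < ⊤) {j : ι} (hj : j ∈ s) : F j < ⊤ := by
  classical
  by_contra hj'
  push_neg at hj'
  have hjt : F j = ⊤ := top_le_iff.mp hj'
  rw [← Finset.add_sum_erase s F hj, hjt,
    EReal.top_add_of_ne_bot (ereal_sum_ne_bot _ _ fun i hi => hb i (Finset.mem_of_mem_erase hi))] at h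
  exact absurd h (lt_irrefl _)

lemma pilp_norm_single {ι : Type*} [Fintype ι] [DecidableEq ι] {β : ι → Type*}
    [∀ i, SeminormedAddCommGroup (β i)] (x : PiLp 2 β) (i : ι) (hx : ∀ j, j ≠ i → x j = 0) :
    ‖x‖ = ‖x i‖ := by
  rw [PiLp.norm_eq_of_L2]
  rw [Finset.sum_eq_single i (fun j _ hj => by rw [hx j hj]; simp) (by simp)]
  exact Real.sqrt_sq (norm_nonneg _)

lemma pilp_norm_apply_le {ι : Type*} [Fintype ι] {β : ι → Type*}
    [∀ i, SeminormedAddCommGroup (β i)] (x : PiLp 2 β) (i : ι) : ‖x i‖ ≤ ‖x‖ := by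
  rw [PiLp.norm_eq_of_L2]
  have h1 : ‖x i‖ ^ 2 ≤ ∑ j, ‖x j‖ ^ 2 :=
    Finset.single_le_sum (fun j _ => sq_nonneg ‖x j‖) (Finset.mem_univ i)
  calc ‖x i‖ = Real.sqrt (‖x i‖ ^ 2) := by rw [Real.sqrt_sq (norm_nonneg _)]
  _ ≤ _ := Real.sqrt_le_sqrt h1

lemma exists_small_ereal {ν : EReal} (hν : 0 < ν) :
    ∃ ρ : ℝ, 0 < ρ ∧ ρ ≤ 1 ∧ (ρ : EReal) ≤ ν := by
  rcases lt_or_ge ν 1 with h | h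
  · have hνt : ν ≠ ⊤ := ne_top_of_lt h
    have hνb : ν ≠ ⊥ := ne_bot_of_gt hν
    have hcoe : ((ν.toReal : ℝ) : EReal) = ν := EReal.coe_toReal hνt hνb
    refine ⟨ν.toReal, ?_, ?_, le_of_eq hcoe⟩
    · have : ((0:ℝ) : EReal) < (ν.toReal : EReal) := by rw [hcoe]; exact_mod_cast hν
      exact_mod_cast this
    · have : (ν.toReal : EReal) ≤ ((1:ℝ) : EReal) := by rw [hcoe]; exact_mod_cast h.le
      exact_mod_cast this
  · exact ⟨1, one_pos, le_refl 1, by exact_mod_cast h⟩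

section blocks
variable {m : ℕ} {nn : Fin m → ℕ} {g : ∀ i : Fin m, EuclideanSpace ℝ (Fin (nn i)) → EReal}
  {f : PiLp 2 (fun i : Fin m => EuclideanSpace ℝ (Fin (nn i))) → EReal}

lemma reg_proj (hbot : ∀ i y, g i y ≠ ⊥) (hf : ∀ x, f x = ∑ i, g i (x i))
    {x v : PiLp 2 (fun i : Fin m => EuclideanSpace ℝ (Fin (nn i)))}
    (hv : v ∈ regSubdiff f x) (i : Fin m) : v i ∈ regSubdiff (g i) (x i) := by
  classical
  obtain ⟨hxt, hreg⟩ := hv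
  rw [hf] at hxt
  have htop : ∀ j, g j (x j) < ⊤ := fun j =>
    ereal_term_lt_top _ _ (fun k _ => hbot k (x k)) hxt (Finset.mem_univ j)
  refine ⟨htop i, fun ε hε => ?_⟩
  set u : EuclideanSpace ℝ (Fin (nn i)) → PiLp 2 (fun i : Fin m => EuclideanSpace ℝ (Fin (nn i))) :=
    fun zi => (WithLp.equiv 2 _).symm (Function.update (WithLp.equiv 2 _ x) i zi) with hu
  have hux : u (x i) = x := by
    simp only [hu]
    rw [show (x i : EuclideanSpace ℝ (Fin (nn i))) = (WithLp.equiv 2 _ x) i from rfl,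
      Function.update_eq_self]
    rfl
  have hucont : Continuous u :=
    PiLp.continuous_toLp _ _ |>.comp (continuous_const.update i continuous_id)
  have hut : Tendsto u (𝓝 (x i)) (𝓝 x) := by
    have h1 := hucont.tendsto (x i); rwa [hux] at h1
  have H := hut.eventually (hreg ε hε)
  refine H.mono fun zi hzi => ?_
  have hcoord0 : ∀ j, j ≠ i → (u zi - x) j = 0 := by
    intro j hj
    rw [PiLp.sub_apply, show u zi j = Function.update (WithLp.equiv 2 _ x) i zi j from rfl,
      Function.update_of_ne hj]
    exact sub_self _
  have hcoordi : (u zi - x) i = zi - x i := by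
    rw [PiLp.sub_apply, show u zi i = Function.update (WithLp.equiv 2 _ x) i zi i from rfl,
      Function.update_self]
  have hinner : (⟪v, u zi - x⟫ : ℝ) = ⟪v i, zi - x i⟫ := by
    rw [PiLp.inner_apply]
    rw [Finset.sum_eq_single i (fun j _ hj => by rw [hcoord0 j hj]; simp) (by simp)]
    rw [hcoordi]
  have hnorm : ‖u zi - x‖ = ‖zi - x i‖ := by
    rw [pilp_norm_single (u zi - x) i hcoord0, hcoordi]
  rw [hinner, hnorm] at hzi
  have hfx : f x = g i (x i) + ∑ j ∈ Finset.univ.erase i, g j (x j) := by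
    rw [hf, ← Finset.add_sum_erase _ _ (Finset.mem_univ i)]
  have hfu : f (u zi) = g i zi + ∑ j ∈ Finset.univ.erase i, g j (x j) := by
    rw [hf, ← Finset.add_sum_erase _ _ (Finset.mem_univ i)]
    congr 1
    · congr 1
      rw [show u zi i = Function.update (WithLp.equiv 2 _ x) i zi i from rfl,
        Function.update_self]
    · refine Finset.sum_congr rfl fun j hj => ?_
      congr 1
      rw [show u zi j = Function.update (WithLp.equiv 2 _ x) i zi j from rfl,
        Function.update_of_ne (Finset.ne_of_mem_erase hj)]
      rfl
  rw [hfx, hfu] at hzi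
  set S := ∑ j ∈ Finset.univ.erase i, g j (x j) with hS
  have hSbot : S ≠ ⊥ := ereal_sum_ne_bot _ _ fun j _ => hbot j (x j)
  have hStop : S ≠ ⊤ :=
    LT.lt.ne (ereal_sum_lt_top _ _ fun j hj => LT.lt.ne (htop j))
  have hgx : g i (x i) = ((g i (x i)).toReal : EReal) :=
    (EReal.coe_toReal (LT.lt.ne (htop i)) (hbot i (x i))).symm
  have hScoe : S = (S.toReal : EReal) := (EReal.coe_toReal hStop hSbot).symm
  rcases eq_top_or_lt_top (g i zi) with hgz | hgz
  · rw [hgz]; exact le_top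
  · have hgzb : g i zi = ((g i zi).toReal : EReal) :=
      (EReal.coe_toReal (LT.lt.ne hgz) (hbot i zi)).symm
    rw [hgx, hgzb]
    rw [hgx, hgzb, hScoe] at hzi
    rw [← EReal.coe_add] at hzi ⊢
    rw [← EReal.coe_add, ← EReal.coe_add] at hzi
    rw [EReal.coe_le_coe_iff] at hzi ⊢
    linarith

lemma g_tendsto (hbot : ∀ i y, g i y ≠ ⊥) (hlsc : ∀ i, LowerSemicontinuous (g i))
    (hf : ∀ x, f x = ∑ i, g i (x i))
    {x : PiLp 2 (fun i : Fin m => EuclideanSpace ℝ (Fin (nn i)))} (hxt : f x < ⊤)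
    {xs : ℕ → PiLp 2 (fun i : Fin m => EuclideanSpace ℝ (Fin (nn i)))}
    (hxs : Tendsto xs atTop (𝓝 x))
    (hfxs : Tendsto (fun t => f (xs t)) atTop (𝓝 (f x))) (i : Fin m) :
    Tendsto (fun t => g i (xs t i)) atTop (𝓝 (g i (x i))) := by
  classical
  have hm : 0 < m := i.pos
  have hproj : ∀ j : Fin m, Tendsto (fun t => xs t j) atTop (𝓝 (x j)) := fun j =>
    (((continuous_apply j).comp (PiLp.continuous_ofLp 2 _)).tendsto x).comp hxs
  rw [hf] at hxt
  have htop : ∀ j, g j (x j) < ⊤ := fun j =>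
    ereal_term_lt_top _ _ (fun k _ => hbot k (x k)) hxt (Finset.mem_univ j)
  set a : Fin m → ℝ := fun j => (g j (x j)).toReal with ha
  have hcoe : ∀ j, g j (x j) = ((a j : ℝ) : EReal) := fun j =>
    (EReal.coe_toReal (LT.lt.ne (htop j)) (hbot j (x j))).symm
  have hFx : f x = ((∑ j, a j : ℝ) : EReal) := by
    rw [hf, ereal_coe_sum]
    exact Finset.sum_congr rfl fun j _ => hcoe j
  have key : ∀ δ : ℝ, 0 < δ → ∀ᶠ t in atTop,
      ((a i - δ : ℝ) : EReal) < g i (xs t i) ∧ g i (xs t i) < ((a i + m * δ : ℝ) : EReal) := by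
    intro δ hδ
    have hA : ∀ᶠ t in atTop, ∀ j, ((a j - δ : ℝ) : EReal) < g j (xs t j) := by
      rw [eventually_all]
      intro j
      have hlt : ((a j - δ : ℝ) : EReal) < g j (x j) := by
        rw [hcoe j]; exact_mod_cast sub_lt_self _ hδ
      exact (hproj j).eventually ((hlsc j) (x j) _ hlt)
    have hB : ∀ᶠ t in atTop, (∑ j, g j (xs t j)) < (((∑ j, a j) + δ : ℝ) : EReal) := by
      have hmem : Iio ((((∑ j, a j) + δ : ℝ)) : EReal) ∈ 𝓝 (f x) := by
        refine isOpen_Iio.mem_nhds ?_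
        rw [hFx, mem_Iio]; exact_mod_cast lt_add_of_pos_right _ hδ
      refine (hfxs.eventually_mem hmem).mono fun t ht => ?_
      rw [← hf]; exact ht
    refine (hA.and hB).mono fun t ⟨hA', hB'⟩ => ?_
    have hbt : ∀ j, g j (xs t j) ≠ ⊥ := fun j => hbot j (xs t j)
    have hst : ∑ j, g j (xs t j) < ⊤ := hB'.trans_le le_top
    have htt : ∀ j, g j (xs t j) < ⊤ := fun j =>
      ereal_term_lt_top _ _ (fun k _ => hbt k) hst (Finset.mem_univ j)
    set b : Fin m → ℝ := fun j => (g j (xs t j)).toReal with hb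
    have hbcoe : ∀ j, g j (xs t j) = ((b j : ℝ) : EReal) := fun j =>
      (EReal.coe_toReal (LT.lt.ne (htt j)) (hbt j)).symm
    have hlow : ∀ j, a j - δ < b j := by
      intro j
      have := hA' j
      rw [hbcoe j, EReal.coe_lt_coe_iff] at this
      exact this
    have hsum : ∑ j, b j < (∑ j, a j) + δ := by
      have : ((∑ j, b j : ℝ) : EReal) < (((∑ j, a j) + δ : ℝ) : EReal) := by
        rw [ereal_coe_sum]
        calc ∑ j, ((b j : ℝ) : EReal) = ∑ j, g j (xs t j) :=
              Finset.sum_congr rfl fun j _ => (hbcoe j).symm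
        _ < _ := hB'
      exact_mod_cast this
    constructor
    · rw [hbcoe i]; exact_mod_cast hlow i
    · rw [hbcoe i]
      have hsplitb : ∑ j, b j = b i + ∑ j ∈ Finset.univ.erase i, b j :=
        (Finset.add_sum_erase _ _ (Finset.mem_univ i)).symm
      have hsplita : ∑ j, a j = a i + ∑ j ∈ Finset.univ.erase i, a j :=
        (Finset.add_sum_erase _ _ (Finset.mem_univ i)).symm
      have hcard : ((Finset.univ.erase i).card : ℝ) = (m : ℝ) - 1 := by
        rw [Finset.card_erase_of_mem (Finset.mem_univ i)]
        simp only [Finset.card_univ, Fintype.card_fin]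
        rw [Nat.cast_sub hm]
        norm_num
      have herase : ∑ j ∈ Finset.univ.erase i, (a j - δ) ≤ ∑ j ∈ Finset.univ.erase i, b j :=
        Finset.sum_le_sum fun j hj => (hlow j).le
      rw [Finset.sum_sub_distrib, Finset.sum_const, nsmul_eq_mul, hcard] at herase
      have : b i < a i + m * δ := by linarith
      exact_mod_cast this
  rw [hcoe i]
  rw [tendsto_order]
  constructor
  · intro c hc
    obtain ⟨z, hcz, hza⟩ := EReal.exists_between_coe_real hc
    have hδ : 0 < a i - z := by
      rw [EReal.coe_lt_coe_iff] at hza; linarith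
    refine (key _ hδ).mono fun t ⟨h1, _⟩ => ?_
    have : ((z : ℝ) : EReal) < g i (xs t i) := by
      convert h1 using 2; ring
    exact hcz.trans this
  · intro c hc
    obtain ⟨z, haz, hzc⟩ := EReal.exists_between_coe_real hc
    have hz : a i < z := by exact_mod_cast haz
    have hδ : 0 < (z - a i) / m := by
      apply div_pos (by linarith) (by exact_mod_cast hm)
    refine (key _ hδ).mono fun t ⟨_, h2⟩ => ?_
    have hmne : (m : ℝ) ≠ 0 := by exact_mod_cast hm.ne'
    have : g i (xs t i) < ((z : ℝ) : EReal) := by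
      convert h2 using 2
      field_simp
      ring
    exact this.trans hzc

lemma lim_proj (hbot : ∀ i y, g i y ≠ ⊥) (hlsc : ∀ i, LowerSemicontinuous (g i))
    (hf : ∀ x, f x = ∑ i, g i (x i))
    {x v : PiLp 2 (fun i : Fin m => EuclideanSpace ℝ (Fin (nn i)))}
    (hv : v ∈ limSubdiff f x) (i : Fin m) : v i ∈ limSubdiff (g i) (x i) := by
  obtain ⟨hxt, xs, vs, hxs, hfxs, hvs, hreg⟩ := hv
  have hxt' := hxt
  rw [hf] at hxt'
  have htop : ∀ j, g j (x j) < ⊤ := fun j =>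
    ereal_term_lt_top _ _ (fun k _ => hbot k (x k)) hxt' (Finset.mem_univ j)
  have hproj : ∀ (y : PiLp 2 (fun i : Fin m => EuclideanSpace ℝ (Fin (nn i))))
      (ys : ℕ → PiLp 2 (fun i : Fin m => EuclideanSpace ℝ (Fin (nn i)))),
      Tendsto ys atTop (𝓝 y) → Tendsto (fun t => ys t i) atTop (𝓝 (y i)) := fun y ys hys =>
    (((continuous_apply i).comp (PiLp.continuous_ofLp 2 _)).tendsto y).comp hys
  exact ⟨htop i, fun t => xs t i, fun t => vs t i, hproj x xs hxs,
    g_tendsto hbot hlsc hf hxt hxs hfxs i, hproj v vs hvs,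
    fun t => reg_proj hbot hf (hreg t) i⟩

lemma infEdist_proj (S : Set (PiLp 2 (fun i : Fin m => EuclideanSpace ℝ (Fin (nn i)))))
    (i : Fin m) (T : Set (EuclideanSpace ℝ (Fin (nn i)))) (h : ∀ w ∈ S, w i ∈ T) :
    EMetric.infEdist 0 T ≤ EMetric.infEdist 0 S := by
  change Metric.infEDist 0 T ≤ Metric.infEDist 0 S
  rw [EMetric.le_infEdist]
  intro w hw
  calc EMetric.infEdist 0 T ≤ edist 0 (w i) := EMetric.infEdist_le_edist_of_mem (h w hw)
  _ ≤ edist 0 w := by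
      rw [edist_dist, edist_dist, dist_zero_left, dist_zero_left]
      exact ENNReal.ofReal_le_ofReal (pilp_norm_apply_le w i)

end blocks

/-- KL exponent for block separable sums of KL functions. -/
theorem stmt_4 {m n : ℕ} (hm : 0 < m) (nn : Fin m → ℕ) (hn : ∑ i, nn i = n)
    (g : ∀ i : Fin m, EuclideanSpace ℝ (Fin (nn i)) → EReal)
    (hproper : ∀ i, ProperFn (g i)) (hclosed : ∀ i, LowerSemicontinuous (g i))
    (f : PiLp 2 (fun i : Fin m => EuclideanSpace ℝ (Fin (nn i))) → EReal)
    (hf : ∀ x, f x = ∑ i, g i (x i))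
    (α : Fin m → ℝ) (hα : ∀ i, 0 < α i ∧ α i < 1)
    (hKL : ∀ i, IsKL (g i) (α i))
    (hcont : ∀ i, ContinuousOn (g i) (subdiffDom (g i)))
    (αmax : ℝ) (hmax1 : ∃ i, αmax = α i) (hmax2 : ∀ i, α i ≤ αmax) :
    IsKL f αmax := by
  classical
  have hbot : ∀ i y, g i y ≠ ⊥ := fun i => (hproper i).1
  haveI : Nonempty (Fin m) := ⟨⟨0, hm⟩⟩
  have hne : (Finset.univ : Finset (Fin m)).Nonempty := Finset.univ_nonempty
  have hαpos : 0 < αmax := by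
    obtain ⟨i0, hi0⟩ := hmax1
    rw [hi0]; exact (hα i0).1
  intro xbar hxbar
  obtain ⟨vbar, hvbar⟩ := hxbar
  have hdom : ∀ i, (xbar i) ∈ subdiffDom (g i) := fun i =>
    ⟨vbar i, lim_proj hbot hclosed hf hvbar i⟩
  have hfxt : f xbar < ⊤ := hvbar.1
  have hfxt' := hfxt
  rw [hf] at hfxt'
  have htopbar : ∀ i, g i (xbar i) < ⊤ := fun i =>
    ereal_term_lt_top _ _ (fun k _ => hbot k (xbar k)) hfxt' (Finset.mem_univ i)
  set abar : Fin m → ℝ := fun i => (g i (xbar i)).toReal with habar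
  have hcoebar : ∀ i, g i (xbar i) = ((abar i : ℝ) : EReal) := fun i =>
    (EReal.coe_toReal (LT.lt.ne (htopbar i)) (hbot i (xbar i))).symm
  have hFbar : f xbar = ((∑ j, abar j : ℝ) : EReal) := by
    rw [hf, ereal_coe_sum]
    exact Finset.sum_congr rfl fun j _ => hcoebar j
  -- KL data
  choose c hc ε hε ν hν hP using fun i => hKL i (xbar i) (hdom i)
  choose ρ hρ0 hρ1 hρν using fun i => exists_small_ereal (hν i)
  -- continuity data
  have hδa : ∀ i, ∃ δ : ℝ, 0 < δ ∧ ∀ y, dist y (xbar i) < δ → y ∈ subdiffDom (g i) →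
      g i y < ((abar i + ρ i : ℝ) : EReal) := by
    intro i
    have hcw : ContinuousWithinAt (g i) (subdiffDom (g i)) (xbar i) :=
      hcont i (xbar i) (hdom i)
    have hmem : Iio (((abar i + ρ i : ℝ)) : EReal) ∈ 𝓝 (g i (xbar i)) := by
      refine isOpen_Iio.mem_nhds ?_
      rw [hcoebar i, mem_Iio]
      exact_mod_cast lt_add_of_pos_right _ (hρ0 i)
    have hpre := hcw hmem
    rw [mem_map, Metric.mem_nhdsWithin_iff] at hpre
    obtain ⟨δ, hδ0, hsub⟩ := hpre
    exact ⟨δ, hδ0, fun y h1 h2 => hsub ⟨Metric.mem_ball.mpr h1, h2⟩⟩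
  choose δ hδ0 hδ using hδa
  -- global constants
  set cm : ℝ := Finset.univ.inf' hne c with hcm
  have hcmpos : 0 < cm := by
    rw [hcm, Finset.lt_inf'_iff]
    exact fun i _ => hc i
  have hcmle : ∀ i, cm ≤ c i := fun i => Finset.inf'_le _ (Finset.mem_univ i)
  set εm : ℝ := Finset.univ.inf' hne ε with hεm
  have hεmpos : 0 < εm := by
    rw [hεm, Finset.lt_inf'_iff]; exact fun i _ => hε i
  have hεmle : ∀ i, εm ≤ ε i := fun i => Finset.inf'_le _ (Finset.mem_univ i)
  set δm : ℝ := Finset.univ.inf' hne δ with hδm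
  have hδmpos : 0 < δm := by
    rw [hδm, Finset.lt_inf'_iff]; exact fun i _ => hδ0 i
  have hδmle : ∀ i, δm ≤ δ i := fun i => Finset.inf'_le _ (Finset.mem_univ i)
  set εg : ℝ := min εm (δm / 2) with hεg
  have hεgpos : 0 < εg := lt_min hεmpos (by linarith)
  refine ⟨cm / (m : ℝ) ^ αmax, ?_, εg, hεgpos, 1, ?_, ?_⟩
  · exact div_pos hcmpos (Real.rpow_pos_of_pos (by exact_mod_cast hm) _)
  · exact_mod_cast zero_lt_one
  intro x hxnear hlow hup
  rcases Set.eq_empty_or_nonempty (limSubdiff f x) with hemp | hnex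
  · rw [hemp]; exact le_top.trans_eq Metric.infEDist_empty.symm
  obtain ⟨v, hv⟩ := hnex
  have hvx : f x < ⊤ := hv.1
  have hvx' := hvx
  rw [hf] at hvx'
  have htopx : ∀ i, g i (x i) < ⊤ := fun i =>
    ereal_term_lt_top _ _ (fun k _ => hbot k (x k)) hvx' (Finset.mem_univ i)
  have hdomx : ∀ i, x i ∈ subdiffDom (g i) := fun i =>
    ⟨v i, lim_proj hbot hclosed hf hv i⟩
  set bb : Fin m → ℝ := fun i => (g i (x i)).toReal with hbb
  have hcoex : ∀ i, g i (x i) = ((bb i : ℝ) : EReal) := fun i =>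
    (EReal.coe_toReal (LT.lt.ne (htopx i)) (hbot i (x i))).symm
  have hFx : f x = ((∑ j, bb j : ℝ) : EReal) := by
    rw [hf, ereal_coe_sum]
    exact Finset.sum_congr rfl fun j _ => hcoex j
  set D := EMetric.infEdist 0 (limSubdiff f x) with hD
  rcases eq_top_or_lt_top D with hDt | hDlt
  · rw [hDt]; exact le_top
  have hDne : D ≠ ⊤ := hDlt.ne
  set Dr : ℝ := D.toReal with hDr
  have hDrnn : 0 ≤ Dr := ENNReal.toReal_nonneg
  have hDi : ∀ i, EMetric.infEdist 0 (limSubdiff (g i) (x i)) ≤ D := fun i =>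
    infEdist_proj _ i _ (fun w hw => lim_proj hbot hclosed hf hw i)
  -- coordinate distances
  have hblocknear : ∀ i, ‖x i - xbar i‖ ≤ εg := by
    intro i
    have h1 : ‖(x - xbar) i‖ ≤ ‖x - xbar‖ := pilp_norm_apply_le _ i
    rw [PiLp.sub_apply] at h1
    exact h1.trans hxnear
  have hgup : ∀ i, g i (x i) < ((abar i + ρ i : ℝ) : EReal) := by
    intro i
    refine hδ i (x i) ?_ (hdomx i)
    rw [dist_eq_norm]
    calc ‖x i - xbar i‖ ≤ εg := hblocknear i
    _ ≤ δm / 2 := min_le_right _ _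
    _ < δm := by linarith
    _ ≤ δ i := hδmle i
  set R : ℝ := (Dr / cm) ^ (1 / αmax) with hR
  have hRnn : 0 ≤ R := Real.rpow_nonneg (div_nonneg hDrnn hcmpos.le) _
  -- blockwise estimate
  have hblock : ∀ i, bb i - abar i ≤ R := by
    intro i
    rcases le_or_gt (bb i) (abar i) with hle | hpos
    · linarith
    -- apply KL at block i
    have hn1 : ‖x i - xbar i‖ ≤ ε i := (hblocknear i).trans ((min_le_left _ _).trans (hεmle i))
    have hn2 : g i (xbar i) < g i (x i) := by
      rw [hcoebar i, hcoex i]; exact_mod_cast hpos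
    have hn3 : g i (x i) < g i (xbar i) + ν i := by
      calc g i (x i) < ((abar i + ρ i : ℝ) : EReal) := hgup i
      _ = ((abar i : ℝ) : EReal) + ((ρ i : ℝ) : EReal) := by exact_mod_cast rfl
      _ ≤ g i (xbar i) + ν i := by
          rw [hcoebar i]
          exact add_le_add_right (hρν i) _
    have hkl := hP i (x i) hn1 hn2 hn3
    have hsub : (g i (x i) - g i (xbar i)).toReal = bb i - abar i := by
      rw [hcoex i, hcoebar i, ← EReal.coe_sub, EReal.toReal_coe]
    rw [hsub] at hkl
    have hklD : ENNReal.ofReal (c i * (bb i - abar i) ^ α i) ≤ D := hkl.trans (hDi i)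
    have hreal : c i * (bb i - abar i) ^ α i ≤ Dr :=
      (ENNReal.ofReal_le_iff_le_toReal hDne).mp hklD
    set t : ℝ := bb i - abar i with htdef
    have ht : 0 < t := by linarith
    have h2 : t ^ α i ≤ Dr / c i := by
      rw [le_div_iff₀ (hc i)]
      calc t ^ α i * c i = c i * t ^ α i := mul_comm _ _
      _ ≤ Dr := hreal
    have hαi := (hα i).1
    have ht3 : t ≤ (Dr / c i) ^ (1 / α i) := by
      have h4 := Real.rpow_le_rpow (Real.rpow_nonneg ht.le _) h2
        (one_div_nonneg.mpr hαi.le)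
      rwa [← Real.rpow_mul ht.le, mul_one_div, div_self hαi.ne', Real.rpow_one] at h4
    have hsnn : 0 ≤ Dr / c i := div_nonneg hDrnn (hc i).le
    rcases le_or_gt (Dr / c i) 1 with hs1 | hs1
    · rcases eq_or_lt_of_le hsnn with hs0 | hs0
      · exfalso
        have : t ≤ (0:ℝ) ^ (1 / α i) := by rw [hs0]; exact ht3
        rw [Real.zero_rpow (by positivity)] at this
        linarith
      · calc t ≤ (Dr / c i) ^ (1 / α i) := ht3
        _ ≤ (Dr / c i) ^ (1 / αmax) := by
            refine Real.rpow_le_rpow_of_exponent_ge hs0 hs1 ?_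
            exact one_div_le_one_div_of_le hαi (hmax2 i)
        _ ≤ R := by
            refine Real.rpow_le_rpow hsnn ?_ (one_div_nonneg.mpr hαpos.le)
            exact div_le_div_of_nonneg_left hDrnn hcmpos (hcmle i)
    · -- Dr / c i > 1 : use t < ρ i ≤ 1 ≤ R
      have htρ : t < ρ i := by
        have := hgup i
        rw [hcoex i, EReal.coe_lt_coe_iff] at this
        linarith
      have h1R : 1 ≤ R := by
        have hge1 : (1:ℝ) ≤ Dr / cm := by
          calc (1:ℝ) ≤ Dr / c i := hs1.le
          _ ≤ Dr / cm := div_le_div_of_nonneg_left hDrnn hcmpos (hcmle i)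
        calc (1:ℝ) = (Dr / cm) ^ (0:ℝ) := (Real.rpow_zero _).symm
        _ ≤ R := Real.rpow_le_rpow_of_exponent_le hge1 (one_div_nonneg.mpr hαpos.le)
      linarith [hρ1 i]
  -- sum up
  set T : ℝ := (f x - f xbar).toReal with hT
  have hTval : T = (∑ j, bb j) - ∑ j, abar j := by
    rw [hT, hFx, hFbar, ← EReal.coe_sub, EReal.toReal_coe]
  have hT0 : 0 < T := by
    have := hlow
    rw [hFx, hFbar, EReal.coe_lt_coe_iff] at this
    rw [hTval]; linarith
  have hTsum : T ≤ m * R := by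
    rw [hTval, ← Finset.sum_sub_distrib]
    calc ∑ j, (bb j - abar j) ≤ ∑ _j : Fin m, R := Finset.sum_le_sum fun j _ => hblock j
    _ = m * R := by rw [Finset.sum_const, Finset.card_univ, Fintype.card_fin, nsmul_eq_mul]
  have hmpos : (0:ℝ) < m := by exact_mod_cast hm
  have hTm : T / m ≤ R := by rw [div_le_iff₀ hmpos]; linarith
  have h5 : (T / m) ^ αmax ≤ Dr / cm := by
    have h6 := Real.rpow_le_rpow (div_nonneg hT0.le hmpos.le) hTm hαpos.le
    rwa [hR, ← Real.rpow_mul (div_nonneg hDrnn hcmpos.le), one_div_mul_cancel hαpos.ne',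
      Real.rpow_one] at h6
  have hfinal : cm / (m : ℝ) ^ αmax * T ^ αmax ≤ Dr := by
    have hdiv : (T / m) ^ αmax = T ^ αmax / (m : ℝ) ^ αmax :=
      Real.div_rpow hT0.le (Nat.cast_nonneg m) αmax
    have h7 : cm * ((T / m) ^ αmax) ≤ cm * (Dr / cm) :=
      mul_le_mul_of_nonneg_left h5 hcmpos.le
    calc cm / (m : ℝ) ^ αmax * T ^ αmax = cm * ((T / m) ^ αmax) := by
          rw [hdiv]; ring
    _ ≤ cm * (Dr / cm) := h7
    _ = Dr := by field_simp
  exact ENNReal.ofReal_le_of_le_toReal hfinal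


end
end

section
/- Let f : ℝ^n → (−∞,∞] be a proper closed convex function that is a KL function with exponent α ∈ (0, 2/3) and is continuous on dom ∂f. Fix λ > 0 and define the Moreau envelope F_λ(x) := inf_{y∈ℝ^n} { f(y) + (1/(2λ))‖y − x‖² }. Then F_λ is a KL function with exponent max{1/2, α/(2−2α)} < 1. -/
open Filter Topology Metric Set
open scoped RealInnerProductSpace

noncomputable section

variable {E : Type*} [NormedAddCommGroup E] [InnerProductSpace ℝ E]

section Aux


/-- lsc function attains min on nonempty compact closed set. -/
theorem lsc_isMinOn {X : Type*} [TopologicalSpace X] {f : X → EReal}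
    (hf : LowerSemicontinuous f) {K : Set X} (hK : IsCompact K) (hKcl : IsClosed K)
    (hne : K.Nonempty) : ∃ p ∈ K, ∀ y ∈ K, f p ≤ f y := by
  obtain ⟨y0, hy0⟩ := hne
  haveI : Nonempty K := ⟨⟨y0, hy0⟩⟩
  set Z : K → Set X := fun y => K ∩ f ⁻¹' (Iic (f y)) with hZ
  have hZcl : ∀ y : K, IsClosed (Z y) := fun y => hKcl.inter (hf.isClosed_preimage (f y))
  have hZcomp : ∀ y : K, IsCompact (Z y) := fun y => hK.inter_right (hf.isClosed_preimage (f y))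
  have hZne : ∀ y : K, (Z y).Nonempty := fun y => ⟨y, y.2, mem_preimage.mpr (mem_Iic.mpr le_rfl)⟩
  have hdir : Directed (· ⊇ ·) Z := by
    intro a b
    rcases le_total (f a) (f b) with h | h
    · exact ⟨a, subset_refl _, fun z hz => ⟨hz.1, le_trans hz.2 h⟩⟩
    · exact ⟨b, fun z hz => ⟨hz.1, le_trans hz.2 h⟩, subset_refl _⟩
  obtain ⟨p, hp⟩ := IsCompact.nonempty_iInter_of_directed_nonempty_isCompact_isClosed
    Z hdir hZne hZcomp hZcl
  simp only [mem_iInter] at hp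
  refine ⟨p, (hp ⟨y0, hy0⟩).1, fun y hy => (hp ⟨y, hy⟩).2⟩


variable {E : Type*} [NormedAddCommGroup E] [InnerProductSpace ℝ E]

/-- helper: EReal inequality to real. -/
theorem coe_le_add_coe {X : EReal} (hX : X ≠ ⊥) {a b : ℝ} (h : (a : EReal) ≤ X + (b : EReal)) :
    ((a - b : ℝ) : EReal) ≤ X := by
  induction X with
  | bot => exact absurd rfl hX
  | coe r =>
    rw [← EReal.coe_add, EReal.coe_le_coe_iff] at h
    exact EReal.coe_le_coe_iff.mpr (by linarith)
  | top => exact le_top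

theorem econvex_ineq {f : E → EReal} (hconv : EConvex f) {u v : E} {a b s t : ℝ}
    (hu : f u ≤ (a : EReal)) (hv : f v ≤ (b : EReal)) (hs : 0 ≤ s) (ht : 0 ≤ t)
    (hst : s + t = 1) : f (s • u + t • v) ≤ ((s * a + t * b : ℝ) : EReal) := by
  have h1 : (u, a) ∈ {p : E × ℝ | f p.1 ≤ (p.2 : EReal)} := hu
  have h2 : (v, b) ∈ {p : E × ℝ | f p.1 ≤ (p.2 : EReal)} := hv
  have := hconv h1 h2 hs ht hst
  simpa [Prod.smul_mk, Prod.mk_add_mk] using this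

/-- Existence of a continuous affine minorant for a proper closed convex function. -/
theorem exists_affine_minorant {f : E → EReal} (hproper : ProperFn f)
    (hclosed : LowerSemicontinuous f) (hconv : EConvex f) :
    ∃ (L : E →L[ℝ] ℝ) (b : ℝ), ∀ y, ((L y + b : ℝ) : EReal) ≤ f y := by
  obtain ⟨x0, hx0⟩ := hproper.2
  have hx0b : f x0 ≠ ⊥ := hproper.1 x0
  set t0 : ℝ := (f x0).toReal with ht0
  have hfx0 : f x0 = (t0 : EReal) := (EReal.coe_toReal hx0.ne hx0b).symm
  set S : Set (E × ℝ) := {p : E × ℝ | f p.1 ≤ (p.2 : EReal)} with hS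
  have hScl : IsClosed S := by
    have h1 : IsClosed {p : E × EReal | f p.1 ≤ p.2} := hclosed.isClosed_epigraph
    have h2 : Continuous (fun p : E × ℝ => (p.1, (p.2 : EReal))) :=
      continuous_fst.prodMk (continuous_coe_real_ereal.comp continuous_snd)
    exact h1.preimage h2
  have hz : (x0, t0 - 1) ∉ S := by
    simp only [hS, mem_setOf_eq, hfx0, EReal.coe_le_coe_iff]
    intro h; linarith
  obtain ⟨l, u, hlS, hlz⟩ := geometric_hahn_banach_closed_point hconv hScl hz
  set β : ℝ := l (0, 1) with hβ
  have hmem : (x0, t0) ∈ S := by simp [hS, mem_setOf_eq, hfx0]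
  have hsplit : ∀ q : ℝ, l (x0, q) = l (x0, t0) + (q - t0) * β := by
    intro q
    have : (x0, q) = (x0, t0) + (q - t0) • ((0 : E), (1 : ℝ)) := by
      simp [Prod.ext_iff]
    rw [this, map_add, map_smul]
    simp [hβ, smul_eq_mul]
  have hβneg : β < 0 := by
    have h1 : l (x0, t0) < u := hlS _ hmem
    have h2 : u < l (x0, t0 - 1) := hlz
    rw [hsplit (t0 - 1)] at h2
    nlinarith
  refine ⟨(-(1/β)) • (l.comp (ContinuousLinearMap.inl ℝ E ℝ)), u / β, fun y => ?_⟩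
  by_cases hy : f y = ⊤
  · rw [hy]; exact le_top
  · have hyb : f y ≠ ⊥ := hproper.1 y
    set r : ℝ := (f y).toReal with hr
    have hfy : f y = (r : EReal) := (EReal.coe_toReal hy hyb).symm
    have hmemy : (y, r) ∈ S := by simp [hS, mem_setOf_eq, hfy]
    have h1 : l (y, r) < u := hlS _ hmemy
    have hsplity : l (y, r) = l (y, 0) + r * β := by
      have : ((y, r) : E × ℝ) = (y, 0) + r • ((0 : E), (1 : ℝ)) := by simp [Prod.ext_iff]
      rw [this, map_add, map_smul]; simp [hβ, smul_eq_mul]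
    rw [hfy, EReal.coe_le_coe_iff]
    have hA : ((-(1/β)) • (l.comp (ContinuousLinearMap.inl ℝ E ℝ))) y = -(1/β) * l (y, 0) := by
      simp [ContinuousLinearMap.smul_apply, ContinuousLinearMap.comp_apply,
        ContinuousLinearMap.inl_apply]
    rw [hA]
    rw [hsplity] at h1
    have hβ' : 0 < -β := by linarith
    have heq : -(1/β) * l (y, 0) + u/β = (l (y, 0) - u)/(-β) := by
      have : β ≠ 0 := ne_of_lt hβneg
      field_simp
      ring_nf
    rw [heq]
    exact le_of_lt ((div_lt_iff₀ hβ').mpr (by linarith))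
  

theorem prox_exists [ProperSpace E] {f : E → EReal} (hproper : ProperFn f)
    (hclosed : LowerSemicontinuous f) (hconv : EConvex f) {lam : ℝ} (hlam : 0 < lam) (x : E) :
    ∃ (p : E) (fp : ℝ), f p = (fp : EReal) ∧
      ∀ y, ((fp + 1/(2*lam) * ‖p - x‖^2 : ℝ) : EReal)
        ≤ f y + ((1/(2*lam) * ‖y - x‖^2 : ℝ) : EReal) := by
  obtain ⟨L, b, hLb⟩ := exists_affine_minorant hproper hclosed hconv
  obtain ⟨y0, hy0⟩ := hproper.2
  have hy0b : f y0 ≠ ⊥ := hproper.1 y0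
  set M : ℝ := (f y0).toReal + 1/(2*lam) * ‖y0 - x‖^2 + 1 with hM
  set R : ℝ := max ‖y0 - x‖ (2*lam*(‖L‖+1) + |M - b - L x| + 1) with hR
  clear_value M
  set h : E → EReal := fun y => f y + ((1/(2*lam) * ‖y - x‖^2 : ℝ) : EReal) with hh
  have hcoe : ∀ y, ((L y + b + 1/(2*lam) * ‖y - x‖^2 : ℝ) : EReal) ≤ h y := by
    intro y
    calc ((L y + b + 1/(2*lam) * ‖y - x‖^2 : ℝ) : EReal)
        = ((L y + b : ℝ) : EReal) + ((1/(2*lam) * ‖y - x‖^2 : ℝ) : EReal) := by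
          rw [← EReal.coe_add]
      _ ≤ f y + ((1/(2*lam) * ‖y - x‖^2 : ℝ) : EReal) := add_le_add_left (hLb y) _
  have hlsc : LowerSemicontinuous h := by
    apply hclosed.add'
    · apply Continuous.lowerSemicontinuous
      exact continuous_coe_real_ereal.comp (by fun_prop)
    · intro z
      exact EReal.continuousAt_add (Or.inr (EReal.coe_ne_bot _)) (Or.inl (hproper.1 z))
  have hout : ∀ y, R < ‖y - x‖ → (M : EReal) ≤ h y := by
    intro y hy
    refine le_trans ?_ (hcoe y)
    rw [EReal.coe_le_coe_iff]
    rw [hR] at hy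
    have ht2 : 2*lam*(‖L‖+1) + |M - b - L x| + 1 ≤ ‖y - x‖ :=
      le_of_lt (lt_of_le_of_lt (le_max_right _ _) hy)
    have hLy : L x - ‖L‖ * ‖y - x‖ ≤ L y := by
      have h1 : |L (y - x)| ≤ ‖L‖ * ‖y - x‖ := by
        have := L.le_opNorm (y - x)
        rwa [Real.norm_eq_abs] at this
      have h2 : L (y - x) = L y - L x := by rw [map_sub]
      have := neg_abs_le (L (y - x))
      linarith [this, h1, h2 ▸ this]
    have hLnn : (0:ℝ) ≤ ‖L‖ := norm_nonneg _
    have htnn : (0:ℝ) ≤ ‖y - x‖ := norm_nonneg _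
    have hkey : (‖L‖+1) * ‖y - x‖ ≤ 1/(2*lam) * ‖y - x‖^2 := by
      rw [sq]
      have h3 : 2*lam*(‖L‖+1) ≤ ‖y - x‖ := by
        have := abs_nonneg (M - b - L x); linarith
      calc (‖L‖+1) * ‖y - x‖ = 1/(2*lam) * ((2*lam*(‖L‖+1)) * ‖y - x‖) := by
            field_simp
        _ ≤ 1/(2*lam) * (‖y - x‖ * ‖y - x‖) := by
            apply mul_le_mul_of_nonneg_left _ (by positivity)
            exact mul_le_mul_of_nonneg_right h3 htnn
    have habs : M - b - L x ≤ |M - b - L x| := le_abs_self _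
    have hkey' : ‖L‖ * ‖y - x‖ + ‖y - x‖ ≤ 1/(2*lam) * ‖y - x‖^2 := by nlinarith [hkey]
    have hpos : (0:ℝ) ≤ 2*lam*(‖L‖+1) := by positivity
    have e1 : L x + ‖y - x‖ ≤ L y + (1/(2*lam) * ‖y - x‖^2) := by linarith [hLy, hkey']
    have e2 : (M - b - L x) + 1 ≤ ‖y - x‖ := by linarith [ht2, habs, hpos]
    linarith [e1, e2]
  have hRnn : (0:ℝ) ≤ R := le_trans (norm_nonneg _) (le_max_left _ _)
  obtain ⟨p, hpK, hpmin⟩ := lsc_isMinOn hlsc (isCompact_closedBall x R)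
    Metric.isClosed_closedBall ⟨x, Metric.mem_closedBall_self hRnn⟩
  have hy0K : y0 ∈ Metric.closedBall x R := by
    rw [Metric.mem_closedBall, dist_eq_norm]; exact le_max_left _ _
  have hy0val : h y0 = ((M - 1 : ℝ) : EReal) := by
    rw [hh]
    simp only []
    rw [(EReal.coe_toReal hy0.ne hy0b).symm, ← EReal.coe_add]
    congr 1
    rw [hM]; ring
  have hglob : ∀ y, h p ≤ h y := by
    intro y
    by_cases hyK : y ∈ Metric.closedBall x R
    · exact hpmin y hyK
    · have : R < ‖y - x‖ := by
        rw [Metric.mem_closedBall, dist_eq_norm, not_le] at hyK; exact hyK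
      calc h p ≤ h y0 := hpmin y0 hy0K
        _ ≤ (M : EReal) := by rw [hy0val]; exact EReal.coe_le_coe_iff.mpr (by linarith)
        _ ≤ h y := hout y this
  have hptop : f p ≠ ⊤ := by
    intro hc
    have h1 : h p = ⊤ := by rw [hh]; simp only []; rw [hc]; exact EReal.top_add_coe _
    have h2 : h p ≤ h y0 := hpmin y0 hy0K
    rw [h1, hy0val] at h2
    exact EReal.coe_ne_top _ (top_le_iff.mp h2)
  refine ⟨p, (f p).toReal, (EReal.coe_toReal hptop (hproper.1 p)).symm, fun y => ?_⟩
  have : ((((f p).toReal : ℝ) + 1/(2*lam) * ‖p - x‖^2 : ℝ) : EReal) = h p := by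
    rw [hh]; simp only []
    rw [EReal.coe_add, EReal.coe_toReal hptop (hproper.1 p)]
  rw [this]
  exact hglob y


theorem mem_regSubdiff_of_quad {f : E → EReal} {p : E} {fp c : ℝ} (hc : 0 ≤ c) {v : E}
    (hfp : f p = (fp : EReal))
    (hlb : ∀ z, ((fp + ⟪v, z - p⟫ - c * ‖z - p‖^2 : ℝ) : EReal) ≤ f z) :
    v ∈ regSubdiff f p := by
  refine ⟨by rw [hfp]; exact EReal.coe_lt_top _, fun ε hε => ?_⟩
  have hball : Metric.closedBall p (ε/(c+1)) ∈ 𝓝 p := Metric.closedBall_mem_nhds _ (by positivity)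
  filter_upwards [hball] with z hz
  rw [Metric.mem_closedBall, dist_eq_norm] at hz
  refine le_trans ?_ (hlb z)
  rw [hfp, ← EReal.coe_add, EReal.coe_le_coe_iff]
  have h1 : c * ‖z - p‖^2 ≤ ε * ‖z - p‖ := by
    rw [sq]
    have h2 : c * ‖z - p‖ ≤ (c+1) * (ε/(c+1)) :=
      mul_le_mul (by linarith) hz (norm_nonneg _) (by linarith)
    have h3 : (c+1) * (ε/(c+1)) = ε := by field_simp
    rw [← mul_assoc]
    exact mul_le_mul_of_nonneg_right (by linarith [h2, h3 ▸ h2]) (norm_nonneg _)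
  linarith

theorem mem_limSubdiff_of_reg {f : E → EReal} {p v : E} (hv : v ∈ regSubdiff f p) :
    v ∈ limSubdiff f p :=
  ⟨hv.1, fun _ => p, fun _ => v, tendsto_const_nhds, tendsto_const_nhds, tendsto_const_nhds,
    fun _ => hv⟩

theorem regSubdiff_subgrad {F : E → EReal} {g : E → ℝ} (hgF : ∀ x, F x = ((g x : ℝ) : EReal))
    (hgconv : ∀ (u w : E) (t : ℝ), 0 ≤ t → t ≤ 1 →
      g ((1-t) • u + t • w) ≤ (1-t) * g u + t * g w)
    {x v : E} (hv : v ∈ regSubdiff F x) (y : E) : g x + ⟪v, y - x⟫ ≤ g y := by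
  rcases eq_or_ne y x with rfl | hyx
  · simp
  have hny : 0 < ‖y - x‖ := by rw [norm_pos_iff, sub_ne_zero]; exact hyx
  have main : ∀ ε : ℝ, 0 < ε → g x + ⟪v, y - x⟫ ≤ g y + ε * ‖y - x‖ := by
    intro ε hε
    obtain ⟨δ, hδ, hev⟩ := Metric.eventually_nhds_iff.mp (hv.2 ε hε)
    set t : ℝ := min 1 (δ / (2 * ‖y - x‖)) with htdef
    have ht0 : 0 < t := lt_min one_pos (by positivity)
    have ht1 : t ≤ 1 := min_le_left _ _
    set z : E := (1 - t) • x + t • y with hz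
    have hzx : z - x = t • (y - x) := by rw [hz]; module
    have hdist : dist z x < δ := by
      rw [dist_eq_norm, hzx, norm_smul, Real.norm_eq_abs, abs_of_pos ht0]
      calc t * ‖y - x‖ ≤ (δ / (2 * ‖y - x‖)) * ‖y - x‖ :=
            mul_le_mul_of_nonneg_right (min_le_right _ _) (norm_nonneg _)
        _ = δ / 2 := by field_simp
        _ < δ := by linarith
    have hineq := hev hdist
    rw [hgF, hgF, ← EReal.coe_add, EReal.coe_le_coe_iff, hzx, real_inner_smul_right,
      norm_smul, Real.norm_eq_abs, abs_of_pos ht0] at hineq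
    have hcvx := hgconv x y t (le_of_lt ht0) ht1
    rw [← hz] at hcvx
    have h2 : t * (g x + ⟪v, y - x⟫) ≤ t * (g y + ε * ‖y - x‖) := by nlinarith [hineq, hcvx]
    exact le_of_mul_le_mul_left h2 ht0
  by_contra hcon
  push_neg at hcon
  have hApos : 0 < g x + ⟪v, y - x⟫ - g y := by linarith
  have hmm := main ((g x + ⟪v, y - x⟫ - g y) / (2 * ‖y - x‖)) (by positivity)
  have heq2 : (g x + ⟪v, y - x⟫ - g y) / (2 * ‖y - x‖) * ‖y - x‖
      = (g x + ⟪v, y - x⟫ - g y) / 2 := by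
    field_simp
  rw [heq2] at hmm
  linarith

theorem limSubdiff_subgrad {F : E → EReal} {g : E → ℝ} (hgF : ∀ x, F x = ((g x : ℝ) : EReal))
    (hgconv : ∀ (u w : E) (t : ℝ), 0 ≤ t → t ≤ 1 →
      g ((1-t) • u + t • w) ≤ (1-t) * g u + t * g w)
    {x w : E} (hw : w ∈ limSubdiff F x) (y : E) : g x + ⟪w, y - x⟫ ≤ g y := by
  obtain ⟨-, xs, vs, hxs, hFxs, hvs, hreg⟩ := hw
  have hgxs : Tendsto (fun t => g (xs t)) atTop (𝓝 (g x)) := by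
    have h1 : Tendsto (fun t => ((g (xs t) : ℝ) : EReal)) atTop (𝓝 ((g x : ℝ) : EReal)) := by
      simpa [hgF] using hFxs
    exact EReal.tendsto_coe.mp h1
  have hineq : ∀ t, g (xs t) + ⟪vs t, y - xs t⟫ ≤ g y :=
    fun t => regSubdiff_subgrad hgF hgconv (hreg t) y
  have hlim : Tendsto (fun t => g (xs t) + ⟪vs t, y - xs t⟫) atTop
      (𝓝 (g x + ⟪w, y - x⟫)) :=
    Tendsto.add hgxs (Tendsto.inner hvs (tendsto_const_nhds.sub hxs))
  exact le_of_tendsto hlim (Eventually.of_forall hineq)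

theorem subgrad_eq {g : E → ℝ} {x p : E} {c fp : ℝ} (hc : 0 < c) {w : E}
    (hmaj : ∀ y, g y ≤ fp + c * ‖p - y‖^2) (heq : g x = fp + c * ‖p - x‖^2)
    (hsub : ∀ y, g x + ⟪w, y - x⟫ ≤ g y) : w = (2*c) • (x - p) := by
  have key : ∀ u : E, ⟪w, u⟫ ≤ 2*c*⟪x - p, u⟫ := by
    intro u
    have h0 : ∀ t : ℝ, 0 < t → ⟪w, u⟫ ≤ 2*c*⟪x - p, u⟫ + c * t * ‖u‖^2 := by
      intro t ht
      have h1 := hsub (x + t • u)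
      have h2 := hmaj (x + t • u)
      rw [add_sub_cancel_left, real_inner_smul_right] at h1
      have h3 : ‖p - (x + t•u)‖^2 = ‖p - x‖^2 - 2*(t*⟪p - x, u⟫) + t^2*‖u‖^2 := by
        have he : p - (x + t•u) = (p - x) - t•u := by module
        rw [he, norm_sub_sq_real, real_inner_smul_right, norm_smul, Real.norm_eq_abs,
          abs_of_pos ht, mul_pow]
        try ring
      have hxp : ⟪x - p, u⟫ = -⟪p - x, u⟫ := by
        rw [← neg_sub p x, inner_neg_left]
      have h4 : t * ⟪w, u⟫ ≤ t * (2*c*⟪x - p, u⟫ + c * t * ‖u‖^2) := by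
        rw [h3] at h2
        rw [hxp]
        nlinarith [h1, h2, heq]
      exact le_of_mul_le_mul_left h4 ht
    apply le_of_forall_pos_le_add
    intro ε hε
    have hD : (0:ℝ) ≤ c * ‖u‖^2 := by positivity
    have h5 := h0 (ε / (c * ‖u‖^2 + 1)) (by positivity)
    have hle : c * (ε / (c*‖u‖^2+1)) * ‖u‖^2 ≤ ε := by
      have e1 : c * (ε / (c*‖u‖^2+1)) * ‖u‖^2 = ε * ((c*‖u‖^2)/(c*‖u‖^2+1)) := by ring
      rw [e1]
      calc ε * ((c*‖u‖^2)/(c*‖u‖^2+1)) ≤ ε * 1 :=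
            mul_le_mul_of_nonneg_left ((div_le_one (by positivity)).mpr (by linarith))
              (le_of_lt hε)
        _ = ε := mul_one ε
    linarith
  have h6 : w - (2*c) • (x - p) = 0 := by
    rw [← inner_self_eq_zero (𝕜 := ℝ)]
    refine le_antisymm ?_ real_inner_self_nonneg
    have h7 : ⟪w - (2*c)•(x-p), w - (2*c)•(x-p)⟫
        = ⟪w, w - (2*c)•(x-p)⟫ - 2*c*⟪x-p, w - (2*c)•(x-p)⟫ := by
      rw [inner_sub_left, real_inner_smul_left]
    rw [h7]
    linarith [key (w - (2*c)•(x-p))]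
  have := sub_eq_zero.mp h6
  exact this

end Aux

set_option maxHeartbeats 2000000 in
/-- KL exponent for the Moreau envelope of a convex KL function. -/
theorem stmt_5 {n : ℕ} (f : EuclideanSpace ℝ (Fin n) → EReal)
    (hproper : ProperFn f) (hclosed : LowerSemicontinuous f) (hconv : EConvex f)
    (α : ℝ) (hα0 : 0 < α) (hα1 : α < 2/3) (hKL : IsKL f α)
    (hcont : ContinuousOn f (subdiffDom f))
    (lam : ℝ) (hlam : 0 < lam)
    (F : EuclideanSpace ℝ (Fin n) → EReal)
    (hF : ∀ x, F x = ⨅ y, f y + ((1/(2*lam) * ‖y - x‖^2 : ℝ) : EReal)) :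
    max (1/2) (α/(2-2*α)) < 1 ∧ IsKL F (max (1/2) (α/(2-2*α))) := by
  have h2α : (0:ℝ) < 2 - 2*α := by linarith
  set θ : ℝ := max (1/2) (α/(2-2*α)) with hθdef
  have hθ1 : θ < 1 := by
    apply max_lt (by norm_num)
    rw [div_lt_one h2α]; linarith
  have hθhalf : (1/2 : ℝ) ≤ θ := le_max_left _ _
  have hθ0 : (0:ℝ) < θ := lt_of_lt_of_le (by norm_num) hθhalf
  have hθα : α ≤ θ := by
    rcases le_or_gt α (1/2) with h | h
    · linarith
    · refine le_trans ?_ (le_max_right _ _)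
      rw [le_div_iff₀ h2α]
      nlinarith
  refine ⟨hθ1, ?_⟩
  -- basic facts about F
  have hFle : ∀ y, F y ≤ f y := by
    intro y
    have h1 : F y ≤ f y + ((1/(2*lam) * ‖y - y‖^2 : ℝ) : EReal) := (hF y) ▸ iInf_le _ y
    simpa using h1
  have hprox : ∀ x, ∃ (p : EuclideanSpace ℝ (Fin n)) (fp : ℝ), f p = (fp : EReal) ∧
      F x = ((fp + 1/(2*lam) * ‖p - x‖^2 : ℝ) : EReal) ∧
      ∀ y, ((fp + 1/(2*lam) * ‖p - x‖^2 : ℝ) : EReal)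
        ≤ f y + ((1/(2*lam) * ‖y - x‖^2 : ℝ) : EReal) := by
    intro x
    obtain ⟨p, fp, hfp, hmin⟩ := prox_exists hproper hclosed hconv hlam x
    refine ⟨p, fp, hfp, ?_, hmin⟩
    rw [hF x]
    apply le_antisymm
    · refine le_trans (iInf_le _ p) ?_
      rw [hfp, ← EReal.coe_add]
    · exact le_iInf hmin
  have hex : ∀ x, ∃ r : ℝ, F x = (r : EReal) := by
    intro x
    obtain ⟨p, fp, -, hFx, -⟩ := hprox x
    exact ⟨_, hFx⟩
  choose g hgF using hex
  -- quadratic majorant of g at any prox point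
  have hmaj : ∀ (x p : EuclideanSpace ℝ (Fin n)) (fp : ℝ), f p = (fp : EReal) →
      ∀ y, g y ≤ fp + 1/(2*lam) * ‖p - y‖^2 := by
    intro x p fp hfp y
    have h1 : F y ≤ f p + ((1/(2*lam) * ‖p - y‖^2 : ℝ) : EReal) := (hF y) ▸ iInf_le _ p
    rw [hgF y, hfp, ← EReal.coe_add, EReal.coe_le_coe_iff] at h1
    exact h1
  -- g is convex
  have hgconv : ∀ (u w : EuclideanSpace ℝ (Fin n)) (t : ℝ), 0 ≤ t → t ≤ 1 →
      g ((1-t) • u + t • w) ≤ (1-t) * g u + t * g w := by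
    intro x1 x2 t ht0 ht1
    obtain ⟨p1, fp1, hfp1, hFx1, -⟩ := hprox x1
    obtain ⟨p2, fp2, hfp2, hFx2, -⟩ := hprox x2
    have hg1 : g x1 = fp1 + 1/(2*lam) * ‖p1 - x1‖^2 :=
      EReal.coe_eq_coe_iff.mp ((hgF x1).symm.trans hFx1)
    have hg2 : g x2 = fp2 + 1/(2*lam) * ‖p2 - x2‖^2 :=
      EReal.coe_eq_coe_iff.mp ((hgF x2).symm.trans hFx2)
    have hfym : f ((1-t) • p1 + t • p2) ≤ (((1-t) * fp1 + t * fp2 : ℝ) : EReal) :=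
      econvex_ineq hconv (le_of_eq hfp1) (le_of_eq hfp2) (by linarith) ht0 (by ring)
    have hnorm : ‖((1-t) • p1 + t • p2) - ((1-t) • x1 + t • x2)‖^2
        ≤ (1-t) * ‖p1 - x1‖^2 + t * ‖p2 - x2‖^2 := by
      have he : ((1-t) • p1 + t • p2) - ((1-t) • x1 + t • x2)
          = (1-t) • (p1 - x1) + t • (p2 - x2) := by module
      rw [he]
      have h1 : ‖(1-t) • (p1 - x1) + t • (p2 - x2)‖ ≤ (1-t) * ‖p1 - x1‖ + t * ‖p2 - x2‖ := by
        refine le_trans (norm_add_le _ _) ?_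
        rw [norm_smul, norm_smul, Real.norm_eq_abs, Real.norm_eq_abs,
          abs_of_nonneg (by linarith), abs_of_nonneg ht0]
      have hn1 := norm_nonneg (p1 - x1)
      have hn2 := norm_nonneg (p2 - x2)
      have hn3 := norm_nonneg ((1-t) • (p1 - x1) + t • (p2 - x2))
      nlinarith [sq_nonneg (‖p1 - x1‖ - ‖p2 - x2‖), mul_nonneg ht0 (sub_nonneg.mpr ht1)]
    have hchain : F ((1-t) • x1 + t • x2) ≤ (((1-t) * g x1 + t * g x2 : ℝ) : EReal) := by
      calc F ((1-t) • x1 + t • x2)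
          ≤ f ((1-t) • p1 + t • p2)
            + ((1/(2*lam) * ‖((1-t) • p1 + t • p2) - ((1-t) • x1 + t • x2)‖^2 : ℝ) : EReal) :=
            (hF _) ▸ iInf_le _ _
        _ ≤ (((1-t) * fp1 + t * fp2 : ℝ) : EReal)
            + ((1/(2*lam) * ‖((1-t) • p1 + t • p2) - ((1-t) • x1 + t • x2)‖^2 : ℝ) : EReal) :=
            add_le_add_left hfym _
        _ = (((1-t) * fp1 + t * fp2
            + 1/(2*lam) * ‖((1-t) • p1 + t • p2) - ((1-t) • x1 + t • x2)‖^2 : ℝ) : EReal) := by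
            rw [← EReal.coe_add]
        _ ≤ (((1-t) * g x1 + t * g x2 : ℝ) : EReal) := by
            rw [EReal.coe_le_coe_iff, hg1, hg2]
            have hmul : 1/(2*lam) * ‖((1-t) • p1 + t • p2) - ((1-t) • x1 + t • x2)‖^2
                ≤ 1/(2*lam) * ((1-t) * ‖p1 - x1‖^2 + t * ‖p2 - x2‖^2) :=
              mul_le_mul_of_nonneg_left hnorm (by positivity)
            nlinarith [hmul]
    rw [hgF ((1-t) • x1 + t • x2), EReal.coe_le_coe_iff] at hchain
    exact hchain
  have hedist : ∀ w : EuclideanSpace ℝ (Fin n),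
      edist (0 : EuclideanSpace ℝ (Fin n)) w = ENNReal.ofReal ‖w‖ := by
    intro w
    rw [edist_dist, dist_eq_norm, zero_sub, norm_neg]
  -- KL property of F at each point
  intro xbar hxbar
  by_cases hmin : ∀ y, F xbar ≤ F y
  · -- xbar is a global minimizer of F (and of f)
    obtain ⟨pb, fpb, hfpb, hFxb, -⟩ := hprox xbar
    have hgxb : g xbar = fpb + 1/(2*lam) * ‖pb - xbar‖^2 :=
      EReal.coe_eq_coe_iff.mp ((hgF xbar).symm.trans hFxb)
    have hgpb_le : g pb ≤ fpb := by
      have h1 : F pb ≤ (fpb : EReal) := le_trans (hFle pb) (le_of_eq hfpb)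
      rw [hgF pb, EReal.coe_le_coe_iff] at h1
      exact h1
    have hxb_le : g xbar ≤ g pb := by
      have h1 := hmin pb
      rw [hgF xbar, hgF pb, EReal.coe_le_coe_iff] at h1
      exact h1
    have hpbx : pb = xbar := by
      have hq2 : (0:ℝ) < 1/(2*lam) := by positivity
      have hq : 1/(2*lam) * ‖pb - xbar‖^2 ≤ 0 := by linarith
      have h2 : ‖pb - xbar‖^2 ≤ 0 := by nlinarith [hq, hq2]
      have h3 : ‖pb - xbar‖ = 0 := by nlinarith [norm_nonneg (pb - xbar)]
      have h4 : pb - xbar = 0 := norm_eq_zero.mp h3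
      exact sub_eq_zero.mp h4
    subst hpbx
    have hgfp : g pb = fpb := by
      rw [hgxb]; simp
    have hfxbar : f pb = ((g pb : ℝ) : EReal) := by rw [hgfp]; exact hfpb
    have hfmin : ∀ z, f pb ≤ f z := by
      intro z
      calc f pb = F pb := by rw [hfxbar, hgF pb]
        _ ≤ F z := hmin z
        _ ≤ f z := hFle z
    -- xbar ∈ dom ∂f, apply KL of f at xbar
    have h0reg : (0 : EuclideanSpace ℝ (Fin n)) ∈ regSubdiff f pb := by
      refine mem_regSubdiff_of_quad (le_refl (0:ℝ)) hfpb ?_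
      intro z
      have he : (fpb + ⟪(0 : EuclideanSpace ℝ (Fin n)), z - pb⟫ - 0 * ‖z - pb‖^2 : ℝ) = fpb := by
        simp
      rw [he, ← hfpb]
      exact hfmin z
    obtain ⟨cf, hcf, εf, hεf, νf, hνf, hKLx⟩ :=
      hKL pb ⟨0, mem_limSubdiff_of_reg h0reg⟩
    obtain ⟨νfR, hνfR0, hνfR⟩ : ∃ r : ℝ, 0 < r ∧ (r : EReal) ≤ νf := by
      induction νf with
      | bot => exact absurd hνf (by simp)
      | coe q => exact ⟨q, EReal.coe_pos.mp hνf, le_rfl⟩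
      | top => exact ⟨1, one_pos, le_top⟩
    obtain ⟨κ, hκdef⟩ : ∃ κ : ℝ, κ = 1 + 1/(2*lam) := ⟨_, rfl⟩
    have hκ1 : (1:ℝ) ≤ κ := by
      rw [hκdef]
      linarith [show (0:ℝ) < 1/(2*lam) by positivity]
    have hκ0 : (0:ℝ) < κ := by linarith
    have hκθ : (0:ℝ) < κ ^ θ := Real.rpow_pos_of_pos hκ0 θ
    obtain ⟨νR, hνRdef⟩ : ∃ v : ℝ, v = min (min 1 (1/(2*lam))) (min νfR (εf^2/(8*lam))) :=
      ⟨_, rfl⟩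
    have hνR0 : 0 < νR := by
      rw [hνRdef]
      exact lt_min (lt_min one_pos (by positivity)) (lt_min hνfR0 (by positivity))
    have hνR1 : νR ≤ 1 := by rw [hνRdef]; exact le_trans (min_le_left _ _) (min_le_left _ _)
    have hνR2 : νR ≤ 1/(2*lam) := by rw [hνRdef]; exact le_trans (min_le_left _ _) (min_le_right _ _)
    have hνR3 : νR ≤ νfR := by rw [hνRdef]; exact le_trans (min_le_right _ _) (min_le_left _ _)
    have hνR4 : νR ≤ εf^2/(8*lam) := by
      rw [hνRdef]; exact le_trans (min_le_right _ _) (min_le_right _ _)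
    obtain ⟨c, hcdef⟩ : ∃ c : ℝ, c = min (1/(lam * κ^θ)) (cf / κ^θ) := ⟨_, rfl⟩
    have hc0 : 0 < c := by
      rw [hcdef]
      apply lt_min (by positivity) (by positivity)
    refine ⟨c, hc0, min 1 (εf/2), lt_min one_pos (by positivity), (νR : EReal),
      EReal.coe_pos.mpr hνR0, ?_⟩
    intro x hx1 hx2 hx3
    obtain ⟨p, fp, hfp, hFx, hminx⟩ := hprox x
    have hgx : g x = fp + 1/(2*lam) * ‖p - x‖^2 :=
      EReal.coe_eq_coe_iff.mp ((hgF x).symm.trans hFx)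
    have hs0 : fpb ≤ fp := by
      have h1 := hfmin p
      rw [hfpb, hfp, EReal.coe_le_coe_iff] at h1
      exact h1
    have hT0 : g pb < g x := by
      rw [hgF pb, hgF x, EReal.coe_lt_coe_iff] at hx2
      exact hx2
    have hT1 : g x - g pb < νR := by
      rw [hgF pb, hgF x, ← EReal.coe_add, EReal.coe_lt_coe_iff] at hx3
      linarith
    have hrnn : (0:ℝ) ≤ ‖p - x‖ := norm_nonneg _
    have hr2 : ‖p - x‖^2 ≤ 2*lam*(g x - g pb) := by
      have e1 : 2*lam*(g x - g pb) = 2*lam*(fp - fpb) + 2*lam*(1/(2*lam) * ‖p - x‖^2) := by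
        rw [hgx, hgfp]; ring
      have e2 : 2*lam*(1/(2*lam) * ‖p - x‖^2) = ‖p - x‖^2 := by field_simp
      have e3 : (0:ℝ) ≤ 2*lam*(fp - fpb) := by
        apply mul_nonneg (by positivity)
        linarith
      linarith
    have e4 : 2*lam*νR ≤ 1 := by
      have e5 := mul_le_mul_of_nonneg_left hνR2 (by positivity : (0:ℝ) ≤ 2*lam)
      have e6 : 2*lam*(1/(2*lam)) = 1 := by field_simp
      linarith
    have e7 : 2*lam*(g x - g pb) ≤ 2*lam*νR :=
      mul_le_mul_of_nonneg_left (le_of_lt hT1) (by positivity : (0:ℝ) ≤ 2*lam)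
    have hrle1 : ‖p - x‖ ≤ 1 := by nlinarith [hr2, e4, e7, hrnn]
    -- identify limiting subgradients of F at x
    have hwchar : ∀ w ∈ limSubdiff F x, w = (2*(1/(2*lam))) • (x - p) := by
      intro w hw
      exact subgrad_eq (by positivity) (hmaj x p fp hfp) hgx
        (fun y => limSubdiff_subgrad hgF hgconv hw y)
    have hvnorm : ‖(2*(1/(2*lam))) • (x - p)‖ = 1/lam * ‖p - x‖ := by
      rw [norm_smul, Real.norm_eq_abs, abs_of_pos (by positivity), norm_sub_rev]
      congr 1
      field_simp
    -- the core real inequality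
    have hcore : c * (g x - g pb)^θ ≤ 1/lam * ‖p - x‖ := by
      have hTpos : 0 < g x - g pb := by linarith
      rcases le_total (fp - g pb) (‖p - x‖^2) with hcase | hcase
      · -- Case A
        have hTA : g x - g pb ≤ κ * ‖p - x‖^2 := by
          rw [hκdef]
          have e : (1 + 1/(2*lam)) * ‖p - x‖^2 = ‖p - x‖^2 + 1/(2*lam) * ‖p - x‖^2 := by ring
          rw [e]
          linarith [hgx, hcase]
        have hrpos : 0 < ‖p - x‖ := by
          rcases lt_or_eq_of_le hrnn with h | h
          · exact h
          · exfalso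
            rw [← h] at hTA
            norm_num at hTA
            linarith
        have p1 : (g x - g pb)^θ ≤ (κ * ‖p - x‖^2)^θ :=
          Real.rpow_le_rpow (le_of_lt hTpos) hTA (le_of_lt hθ0)
        have p2 : (κ * ‖p - x‖^2)^θ = κ^θ * (‖p - x‖^2)^θ :=
          Real.mul_rpow (le_of_lt hκ0) (sq_nonneg _)
        have p3 : (‖p - x‖^2)^θ = ‖p - x‖^(2*θ) := by
          rw [← Real.rpow_natCast ‖p - x‖ 2, ← Real.rpow_mul hrnn]
          norm_num
        have p4 : ‖p - x‖^(2*θ) ≤ ‖p - x‖ := by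
          have := Real.rpow_le_rpow_of_exponent_ge hrpos hrle1 (by linarith : (1:ℝ) ≤ 2*θ)
          rwa [Real.rpow_one] at this
        have p5 : (g x - g pb)^θ ≤ κ^θ * ‖p - x‖ := by
          rw [p2, p3] at p1
          exact le_trans p1 (mul_le_mul_of_nonneg_left p4 (le_of_lt hκθ))
        calc c * (g x - g pb)^θ ≤ (1/(lam * κ^θ)) * (κ^θ * ‖p - x‖) := by
              apply mul_le_mul (hcdef ▸ min_le_left _ _) p5
                (Real.rpow_nonneg (le_of_lt hTpos) θ) (by positivity)
          _ = 1/lam * ‖p - x‖ := by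
              have hκθne : κ^θ ≠ 0 := ne_of_gt hκθ
              field_simp
              try ring
      · -- Case B
        have hsT : fp - g pb ≤ g x - g pb := by nlinarith [hgx]
        have hTB : g x - g pb ≤ κ * (fp - g pb) := by
          rw [hκdef]
          have h5 : 1/(2*lam) * ‖p - x‖^2 ≤ 1/(2*lam) * (fp - g pb) :=
            mul_le_mul_of_nonneg_left hcase (by positivity)
          nlinarith [hgx]
        have hspos : 0 < fp - g pb := by nlinarith [hTB, hκ0]
        -- KL applies at p
        have hrεf : ‖p - x‖ ≤ εf/2 := by
          have h6 : ‖p - x‖^2 ≤ εf^2/4 := by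
            have e8 : 2*lam*νR ≤ 2*lam*(εf^2/(8*lam)) :=
              mul_le_mul_of_nonneg_left hνR4 (by positivity : (0:ℝ) ≤ 2*lam)
            have e9 : 2*lam*(εf^2/(8*lam)) = εf^2/4 := by field_simp; ring
            linarith [hr2, e7]
          nlinarith [hεf, hrnn, h6]
        have hpxbar : ‖p - pb‖ ≤ εf := by
          have he : p - pb = (p - x) + (x - pb) := by module
          have h7 : ‖p - pb‖ ≤ ‖p - x‖ + ‖x - pb‖ := by rw [he]; exact norm_add_le _ _
          have h8 : ‖x - pb‖ ≤ εf/2 := le_trans hx1 (min_le_right _ _)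
          linarith
        have hfplt : f pb < f p := by
          rw [hfpb, hfp, EReal.coe_lt_coe_iff]
          linarith [hgfp ▸ hspos]
        have hfpub : f p < f pb + νf := by
          rw [hfp, hfpb]
          calc ((fp : ℝ) : EReal) < ((fpb + νfR : ℝ) : EReal) := by
                rw [EReal.coe_lt_coe_iff]
                nlinarith [hsT, hT1, hνR3, hgfp]
            _ = (fpb : EReal) + (νfR : EReal) := by rw [← EReal.coe_add]
            _ ≤ (fpb : EReal) + νf := add_le_add_right hνfR _
        have hKLp := hKLx p hpxbar hfplt hfpub
        have hsub : (f p - f pb).toReal = fp - fpb := by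
          rw [hfp, hfpb, ← EReal.coe_sub, EReal.toReal_coe]
        rw [hsub] at hKLp
        -- the prox subgradient of f at p
        have hvreg : (2*(1/(2*lam))) • (x - p) ∈ regSubdiff f p := by
          refine mem_regSubdiff_of_quad (by positivity : (0:ℝ) ≤ 1/(2*lam)) hfp ?_
          intro z
          have h9 := coe_le_add_coe (hproper.1 z) (hminx z)
          refine le_trans (le_of_eq ?_) h9
          rw [EReal.coe_eq_coe_iff]
          have hident : ⟪(2*(1/(2*lam))) • (x-p), z-p⟫
              = 1/(2*lam) * (2 * ⟪z - p, x - p⟫) := by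
            rw [real_inner_smul_left, real_inner_comm]
            ring
          have hnorm2 : ‖z - x‖^2 = ‖z - p‖^2 - 2*⟪z - p, x - p⟫ + ‖x - p‖^2 := by
            have he : z - x = (z - p) - (x - p) := by module
            rw [he, norm_sub_sq_real]
            try ring
          have hnorm3 : ‖p - x‖ = ‖x - p‖ := norm_sub_rev _ _
          rw [hident, hnorm3]
          linear_combination (1/(2*lam)) * hnorm2
        have hvlim := mem_limSubdiff_of_reg hvreg
        have h10 : EMetric.infEdist 0 (limSubdiff f p) ≤ ENNReal.ofReal ‖(2*(1/(2*lam))) • (x - p)‖ := by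
          rw [← hedist]
          exact EMetric.infEdist_le_edist_of_mem hvlim
        have h11 : cf * (fp - fpb)^α ≤ ‖(2*(1/(2*lam))) • (x - p)‖ := by
          have h12 := le_trans hKLp h10
          exact (ENNReal.ofReal_le_ofReal_iff (norm_nonneg _)).mp h12
        rw [hvnorm] at h11
        have hgfp' : fp - fpb = fp - g pb := by rw [hgfp]
        rw [hgfp'] at h11
        -- chain
        have q1 : (g x - g pb)^θ ≤ (κ * (fp - g pb))^θ :=
          Real.rpow_le_rpow (le_of_lt hTpos) hTB (le_of_lt hθ0)
        have q2 : (κ * (fp - g pb))^θ = κ^θ * (fp - g pb)^θ :=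
          Real.mul_rpow (le_of_lt hκ0) (le_of_lt hspos)
        have q3 : (fp - g pb)^θ ≤ (fp - g pb)^α :=
          Real.rpow_le_rpow_of_exponent_ge hspos (by linarith [hsT, hT1, hνR1]) hθα
        calc c * (g x - g pb)^θ ≤ (cf/κ^θ) * (κ^θ * (fp - g pb)^θ) := by
              apply mul_le_mul (hcdef ▸ min_le_right _ _) (q1.trans (le_of_eq q2))
                (Real.rpow_nonneg (le_of_lt hTpos) θ) (by positivity)
          _ = cf * (fp - g pb)^θ := by
              have hκθne : κ^θ ≠ 0 := ne_of_gt hκθ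
              field_simp
              try ring
          _ ≤ cf * (fp - g pb)^α := mul_le_mul_of_nonneg_left q3 (le_of_lt hcf)
          _ ≤ 1/lam * ‖p - x‖ := h11
    -- conclude
    have hTcoe : F x - F pb = ((g x - g pb : ℝ) : EReal) := by
      rw [hgF x, hgF pb, ← EReal.coe_sub]
    rw [hTcoe, EReal.toReal_coe]
    apply EMetric.le_infEdist.mpr
    intro w hw
    rw [hwchar w hw, hedist]
    apply ENNReal.ofReal_le_ofReal
    rw [hvnorm]
    exact hcore
  · -- xbar is not a minimizer of F
    push_neg at hmin
    obtain ⟨ystar, hystar⟩ := hmin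
    have hym : g ystar < g xbar := by
      rw [hgF ystar, hgF xbar, EReal.coe_lt_coe_iff] at hystar
      exact hystar
    obtain ⟨M, hMdef⟩ : ∃ M : ℝ, M = ‖ystar - xbar‖ + 1 := ⟨_, rfl⟩
    have hM0 : 0 < M := by rw [hMdef]; positivity
    refine ⟨(g xbar - g ystar) / M, div_pos (by linarith) hM0, 1, one_pos, (1 : EReal),
      by norm_num, ?_⟩
    intro x hx1 hx2 hx3
    have hT0 : g xbar < g x := by
      rw [hgF xbar, hgF x, EReal.coe_lt_coe_iff] at hx2
      exact hx2
    have hT1 : g x - g xbar < 1 := by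
      rw [hgF xbar, hgF x, ← EReal.coe_one, ← EReal.coe_add, EReal.coe_lt_coe_iff] at hx3
      linarith
    have hTcoe : F x - F xbar = ((g x - g xbar : ℝ) : EReal) := by
      rw [hgF x, hgF xbar, ← EReal.coe_sub]
    rw [hTcoe, EReal.toReal_coe]
    apply EMetric.le_infEdist.mpr
    intro w hw
    have hsub := limSubdiff_subgrad hgF hgconv hw ystar
    have hCS : ⟪w, x - ystar⟫ ≤ ‖w‖ * ‖x - ystar‖ := real_inner_le_norm _ _
    have hdd : ‖x - ystar‖ ≤ M := by
      have he : x - ystar = (x - xbar) + (xbar - ystar) := by module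
      have h1 : ‖x - ystar‖ ≤ ‖x - xbar‖ + ‖xbar - ystar‖ := by rw [he]; exact norm_add_le _ _
      have h2 : ‖xbar - ystar‖ = ‖ystar - xbar‖ := norm_sub_rev _ _
      rw [hMdef]
      linarith
    have hinner : g xbar - g ystar ≤ ⟪w, x - ystar⟫ := by
      have h3 : ⟪w, ystar - x⟫ = -⟪w, x - ystar⟫ := by
        rw [← inner_neg_right]
        congr 1
        module
      rw [h3] at hsub
      linarith
    have hwnorm : (g xbar - g ystar) / M ≤ ‖w‖ := by
      rw [div_le_iff₀ hM0]
      calc g xbar - g ystar ≤ ⟪w, x - ystar⟫ := hinner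
        _ ≤ ‖w‖ * ‖x - ystar‖ := hCS
        _ ≤ ‖w‖ * M := mul_le_mul_of_nonneg_left hdd (norm_nonneg _)
    rw [hedist]
    apply ENNReal.ofReal_le_ofReal
    have hTpow : (g x - g xbar)^θ ≤ 1 :=
      Real.rpow_le_one (by linarith) (by linarith) (le_of_lt hθ0)
    calc (g xbar - g ystar)/M * (g x - g xbar)^θ ≤ (g xbar - g ystar)/M * 1 :=
          mul_le_mul_of_nonneg_left hTpow (le_of_lt (div_pos (by linarith) hM0))
      _ = (g xbar - g ystar)/M := mul_one _
      _ ≤ ‖w‖ := hwnorm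

end
end

section
/- Let f : ℝ^n → (−∞,∞] be a proper closed function that has the KL property at x̄ ∈ dom ∂f with exponent α ∈ [1/2, 1), and let β > 0. Define F : ℝ^n × ℝ^n → (−∞,∞] by F(x,y) := f(x) + (β/2)‖x − y‖². Then F has the KL property at (x̄, x̄) with exponent α. -/
open Filter Topology Metric Set
open scoped RealInnerProductSpace

noncomputable section

variable {E : Type*} [NormedAddCommGroup E] [InnerProductSpace ℝ E]

lemma aux_rpow_add_le (a b p : ℝ) (ha : 0 ≤ a) (hb : 0 ≤ b) (hp : 0 ≤ p) (hp1 : p ≤ 1) :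
    (a + b) ^ p ≤ a ^ p + b ^ p := by
  have h := NNReal.rpow_add_le_add_rpow a.toNNReal b.toNNReal hp hp1
  have h2 := NNReal.coe_le_coe.2 h
  push_cast at h2
  rwa [Real.coe_toNNReal a ha, Real.coe_toNNReal b hb] at h2

lemma aux_fst_cont : Continuous (fun q : WithLp 2 (E × E) => q.fst) :=
  continuous_fst.comp (WithLp.prod_continuous_ofLp 2 E E)

lemma aux_snd_cont : Continuous (fun q : WithLp 2 (E × E) => q.snd) :=
  continuous_snd.comp (WithLp.prod_continuous_ofLp 2 E E)

lemma aux_fst_norm_le (q : WithLp 2 (E × E)) : ‖q.fst‖ ≤ ‖q‖ := by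
  have h := WithLp.prod_norm_sq_eq_of_L2 q
  nlinarith [norm_nonneg q, norm_nonneg q.fst, norm_nonneg q.snd]

lemma aux_snd_norm_le (q : WithLp 2 (E × E)) : ‖q.snd‖ ≤ ‖q‖ := by
  have h := WithLp.prod_norm_sq_eq_of_L2 q
  nlinarith [norm_nonneg q, norm_nonneg q.fst, norm_nonneg q.snd]

lemma aux_reg_pair (f : E → EReal) (hproper : ProperFn f) (β : ℝ) (hβ : 0 < β)
    (F : WithLp 2 (E × E) → EReal)
    (hF : ∀ p : WithLp 2 (E × E), F p = f p.fst + ((β/2 * ‖p.fst - p.snd‖^2 : ℝ) : EReal))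
    (p v : WithLp 2 (E × E)) (hv : v ∈ regSubdiff F p) :
    f p.fst < ⊤ ∧ v.fst - β • (p.fst - p.snd) ∈ regSubdiff f p.fst ∧ v.snd = β • (p.snd - p.fst) := by
  obtain ⟨hFp, hev⟩ := hv
  have hfx_top : f p.fst ≠ ⊤ := by
    intro h
    rw [hF p, h, EReal.top_add_coe] at hFp
    exact lt_irrefl _ hFp
  have hfx_bot : f p.fst ≠ ⊥ := hproper.1 p.fst
  set fx := (f p.fst).toReal with hfxdef
  have hfx_eq : (fx : EReal) = f p.fst := EReal.coe_toReal hfx_top hfx_bot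
  refine ⟨lt_top_iff_ne_top.2 hfx_top, ⟨lt_top_iff_ne_top.2 hfx_top, ?_⟩, ?_⟩
  · -- the x-component
    intro ε hε
    have h1 := hev (ε/2) (by positivity)
    have hφc : Tendsto (fun x' : E => (WithLp.equiv 2 (E × E)).symm (x', p.snd)) (𝓝 p.fst) (𝓝 p) := by
      have hc : Continuous (fun x' : E => (WithLp.equiv 2 (E × E)).symm (x', p.snd)) :=
        (WithLp.prod_continuous_toLp 2 E E).comp (continuous_id.prodMk continuous_const)
      have h0 := hc.tendsto p.fst
      exact (show (fun x' : E => (WithLp.equiv 2 (E × E)).symm (x', p.snd)) p.fst = p from rfl) ▸ h0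
    have h3 := hφc.eventually h1
    have h4 : ∀ᶠ x' in 𝓝 p.fst, ‖x' - p.fst‖ ≤ ε/β := by
      filter_upwards [Metric.closedBall_mem_nhds p.fst (show (0:ℝ) < ε/β by positivity)] with x' hx'
      rw [Metric.mem_closedBall, dist_eq_norm] at hx'
      exact hx'
    filter_upwards [h3, h4] with x' hx1 hx2
    by_cases hx't : f x' = ⊤
    · rw [hx't]; exact le_top
    have hx'b : f x' ≠ ⊥ := hproper.1 x'
    set fx' := (f x').toReal with hfx'def
    have hfx'_eq : (fx' : EReal) = f x' := EReal.coe_toReal hx't hx'b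
    -- rewrite hypothesis into a real inequality
    rw [hF, hF] at hx1
    simp only [show ((WithLp.equiv 2 (E × E)).symm (x', p.snd)).fst = x' from rfl,
      show ((WithLp.equiv 2 (E × E)).symm (x', p.snd)).snd = p.snd from rfl] at hx1
    have hsub1 : ((WithLp.equiv 2 (E × E)).symm (x', p.snd) - p).fst = x' - p.fst := rfl
    have hsub2 : ((WithLp.equiv 2 (E × E)).symm (x', p.snd) - p).snd = (0 : E) := sub_self p.snd
    have hinner : ⟪(WithLp.equiv 2 (E × E)).symm (x', p.snd) - p, v⟫ = ⟪v.fst, x' - p.fst⟫ := by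
      rw [WithLp.prod_inner_apply, WithLp.ofLp_fst, WithLp.ofLp_snd, WithLp.ofLp_fst,
        WithLp.ofLp_snd, hsub1, hsub2, inner_zero_left, add_zero, real_inner_comm]
    have hinner' : ⟪v, (WithLp.equiv 2 (E × E)).symm (x', p.snd) - p⟫ = ⟪v.fst, x' - p.fst⟫ := by
      rw [real_inner_comm]; exact hinner
    have hnorm : ‖(WithLp.equiv 2 (E × E)).symm (x', p.snd) - p‖ = ‖x' - p.fst‖ := by
      rw [WithLp.prod_norm_eq_of_L2, hsub1, hsub2]
      simp [Real.sqrt_sq (norm_nonneg _)]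
    rw [hinner', hnorm, ← hfx_eq, ← hfx'_eq, ← EReal.coe_add, ← EReal.coe_add,
      ← EReal.coe_add, EReal.coe_le_coe_iff] at hx1
    rw [← hfx_eq, ← hfx'_eq, ← EReal.coe_add, EReal.coe_le_coe_iff]
    have hexp : ‖x' - p.snd‖^2 = ‖x' - p.fst‖^2 + 2*⟪x' - p.fst, p.fst - p.snd⟫ + ‖p.fst - p.snd‖^2 := by
      have h : x' - p.snd = (x' - p.fst) + (p.fst - p.snd) := by abel
      rw [h, norm_add_sq_real]
    have hil : ⟪v.fst - β • (p.fst - p.snd), x' - p.fst⟫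
        = ⟪v.fst, x' - p.fst⟫ - β * ⟪p.fst - p.snd, x' - p.fst⟫ := by
      rw [inner_sub_left, real_inner_smul_left]
    rw [hil]
    have hcm : ⟪p.fst - p.snd, x' - p.fst⟫ = ⟪x' - p.fst, p.fst - p.snd⟫ := real_inner_comm _ _
    have hd' : ‖x' - p.fst‖ * β ≤ ε := (le_div_iff₀ hβ).1 hx2
    have hkey : β/2 * ‖x' - p.fst‖^2 ≤ ε/2 * ‖x' - p.fst‖ := by
      nlinarith [norm_nonneg (x' - p.fst), mul_le_mul_of_nonneg_right hd' (norm_nonneg (x' - p.fst))]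
    nlinarith [hx1, hexp, hcm, norm_nonneg (x' - p.fst)]
  · -- the y-component
    by_contra hne
    set dv := v.snd - β • (p.snd - p.fst) with hdvdef
    have hdv : dv ≠ 0 := sub_ne_zero.mpr hne
    have hnd : 0 < ‖dv‖ := norm_pos_iff.2 hdv
    have h1 := hev (‖dv‖/4) (by positivity)
    have hψc : Tendsto (fun y' : E => (WithLp.equiv 2 (E × E)).symm (p.fst, y')) (𝓝 p.snd) (𝓝 p) := by
      have hc : Continuous (fun y' : E => (WithLp.equiv 2 (E × E)).symm (p.fst, y')) :=
        (WithLp.prod_continuous_toLp 2 E E).comp (continuous_const.prodMk continuous_id)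
      have h0 := hc.tendsto p.snd
      exact (show (fun y' : E => (WithLp.equiv 2 (E × E)).symm (p.fst, y')) p.snd = p from rfl) ▸ h0
    have h3 := hψc.eventually h1
    obtain ⟨δ, hδ, hball⟩ := Metric.eventually_nhds_iff.1 h3
    set t := min (δ/(2*‖dv‖)) (1/(2*β)) with htdef
    have ht : 0 < t := lt_min (by positivity) (by positivity)
    have htβ : β * t ≤ 1/2 := by
      have := min_le_right (δ/(2*‖dv‖)) (1/(2*β))
      calc β * t ≤ β * (1/(2*β)) := by nlinarith
        _ = 1/2 := by field_simp
    have htδ : dist (p.snd + t • dv) p.snd < δ := by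
      rw [dist_eq_norm, add_sub_cancel_left, norm_smul, Real.norm_eq_abs, abs_of_pos ht]
      have h5 : t ≤ δ/(2*‖dv‖) := min_le_left _ _
      calc t * ‖dv‖ ≤ (δ/(2*‖dv‖)) * ‖dv‖ := by nlinarith
        _ = δ/2 := by field_simp
        _ < δ := by linarith
    have hineq := hball htδ
    set y' := p.snd + t • dv with hy'def
    rw [hF, hF] at hineq
    simp only [show ((WithLp.equiv 2 (E × E)).symm (p.fst, y')).fst = p.fst from rfl,
      show ((WithLp.equiv 2 (E × E)).symm (p.fst, y')).snd = y' from rfl] at hineq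
    have hsub1 : ((WithLp.equiv 2 (E × E)).symm (p.fst, y') - p).fst = (0 : E) := sub_self p.fst
    have hsub2 : ((WithLp.equiv 2 (E × E)).symm (p.fst, y') - p).snd = t • dv := by
      show y' - p.snd = t • dv
      rw [hy'def, add_sub_cancel_left]
    have hinner : ⟪v, (WithLp.equiv 2 (E × E)).symm (p.fst, y') - p⟫ = t * ⟪v.snd, dv⟫ := by
      rw [WithLp.prod_inner_apply, WithLp.ofLp_fst, WithLp.ofLp_snd, WithLp.ofLp_fst,
        WithLp.ofLp_snd, hsub1, hsub2, inner_zero_right, zero_add,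
        real_inner_smul_right]
    have hnorm : ‖(WithLp.equiv 2 (E × E)).symm (p.fst, y') - p‖ = t * ‖dv‖ := by
      rw [WithLp.prod_norm_eq_of_L2, hsub1, hsub2]
      simp [norm_smul, Real.norm_eq_abs, abs_of_pos ht, Real.sqrt_sq,
        mul_nonneg ht.le (norm_nonneg dv)]
    rw [hinner, hnorm, ← hfx_eq, ← EReal.coe_add, ← EReal.coe_add, ← EReal.coe_add,
      EReal.coe_le_coe_iff] at hineq
    have hv2 : ⟪v.snd, dv⟫ = ‖dv‖^2 + β * ⟪p.snd - p.fst, dv⟫ := by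
      have : v.snd = dv + β • (p.snd - p.fst) := by rw [hdvdef]; abel
      rw [this, inner_add_left, real_inner_smul_left, real_inner_self_eq_norm_sq]
    have hexp : ‖p.fst - y'‖^2 = ‖p.fst - p.snd‖^2 - 2*t*⟪p.fst - p.snd, dv⟫ + t^2*‖dv‖^2 := by
      have h : p.fst - y' = (p.fst - p.snd) - t • dv := by rw [hy'def]; abel
      rw [h, norm_sub_sq_real, real_inner_smul_right, norm_smul, Real.norm_eq_abs,
        abs_of_pos ht, mul_pow]
      ring
    have hcm : ⟪p.snd - p.fst, dv⟫ = -⟪p.fst - p.snd, dv⟫ := by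
      rw [← inner_neg_left, neg_sub]
    nlinarith [hineq, hv2, hexp, hcm, mul_pos ht (mul_pos hnd hnd),
      mul_le_mul_of_nonneg_right htβ (mul_nonneg ht.le (mul_nonneg hnd.le hnd.le))]

lemma aux_lim_pair (f : E → EReal) (hproper : ProperFn f) (β : ℝ) (hβ : 0 < β)
    (F : WithLp 2 (E × E) → EReal)
    (hF : ∀ p : WithLp 2 (E × E), F p = f p.fst + ((β/2 * ‖p.fst - p.snd‖^2 : ℝ) : EReal))
    (p v : WithLp 2 (E × E)) (hv : v ∈ limSubdiff F p) :
    f p.fst < ⊤ ∧ v.fst - β • (p.fst - p.snd) ∈ limSubdiff f p.fst ∧ v.snd = β • (p.snd - p.fst) := by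
  obtain ⟨hFp, ps, vs, hps, hFps, hvs, hmem⟩ := hv
  have hreg := fun t => aux_reg_pair f hproper β hβ F hF (ps t) (vs t) (hmem t)
  have hfx_top : f p.fst ≠ ⊤ := by
    intro h
    rw [hF p, h, EReal.top_add_coe] at hFp
    exact lt_irrefl _ hFp
  have hfx_bot : f p.fst ≠ ⊥ := hproper.1 p.fst
  have hfx_eq : ((f p.fst).toReal : EReal) = f p.fst := EReal.coe_toReal hfx_top hfx_bot
  have cfst : Continuous (fun q : WithLp 2 (E × E) => q.fst) :=
    continuous_fst.comp (WithLp.prod_continuous_ofLp 2 E E)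
  have csnd : Continuous (fun q : WithLp 2 (E × E) => q.snd) :=
    continuous_snd.comp (WithLp.prod_continuous_ofLp 2 E E)
  have hx : Tendsto (fun t => (ps t).fst) atTop (𝓝 p.fst) := (cfst.tendsto p).comp hps
  have hy : Tendsto (fun t => (ps t).snd) atTop (𝓝 p.snd) := (csnd.tendsto p).comp hps
  have hu : Tendsto (fun t => (vs t).fst) atTop (𝓝 v.fst) := (cfst.tendsto v).comp hvs
  have hw : Tendsto (fun t => (vs t).snd) atTop (𝓝 v.snd) := (csnd.tendsto v).comp hvs
  have hw2 : v.snd = β • (p.snd - p.fst) := by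
    have hW : Tendsto (fun t => β • ((ps t).snd - (ps t).fst)) atTop (𝓝 v.snd) :=
      hw.congr (fun t => (hreg t).2.2)
    have hW' : Tendsto (fun t => β • ((ps t).snd - (ps t).fst)) atTop (𝓝 (β • (p.snd - p.fst))) :=
      (hy.sub hx).const_smul β
    exact tendsto_nhds_unique hW hW'
  refine ⟨lt_top_iff_ne_top.2 hfx_top, ⟨lt_top_iff_ne_top.2 hfx_top,
    fun t => (ps t).fst, fun t => (vs t).fst - β • ((ps t).fst - (ps t).snd), hx, ?_, ?_, ?_⟩, hw2⟩
  · -- f (xs t) → f p.fst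
    have hgt : Tendsto (fun t => β/2 * ‖(ps t).fst - (ps t).snd‖^2) atTop
        (𝓝 (β/2 * ‖p.fst - p.snd‖^2)) :=
      (((hx.sub hy).norm.pow 2).const_mul (β/2))
    have htop : ∀ t, f (ps t).fst ≠ ⊤ := fun t => (hreg t).1.ne
    have hbot : ∀ t, f (ps t).fst ≠ ⊥ := fun t => hproper.1 _
    have hFr : ∀ t, F (ps t)
        = (((f (ps t).fst).toReal + β/2 * ‖(ps t).fst - (ps t).snd‖^2 : ℝ) : EReal) := by
      intro t
      rw [hF]
      conv_lhs => rw [← EReal.coe_toReal (htop t) (hbot t)]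
      rw [← EReal.coe_add]
    have hFpe : F p = (((f p.fst).toReal + β/2 * ‖p.fst - p.snd‖^2 : ℝ) : EReal) := by
      rw [hF]
      conv_lhs => rw [← hfx_eq]
      rw [← EReal.coe_add]
    rw [hFpe] at hFps
    have h4 := (hFps.congr hFr : Tendsto _ atTop _)
    have h5 := EReal.tendsto_coe.1 h4
    have h6 : Tendsto (fun t => (f (ps t).fst).toReal) atTop (𝓝 ((f p.fst).toReal)) := by
      have := h5.sub hgt
      simpa using this
    have h7 := EReal.tendsto_coe.2 h6
    rw [hfx_eq] at h7
    exact h7.congr (fun t => EReal.coe_toReal (htop t) (hbot t))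
  · exact hu.sub ((hx.sub hy).const_smul β)
  · exact fun t => (hreg t).2.1

/-- KL exponent of the iPiano potential `F(x,y) = f(x) + (β/2)‖x−y‖²`. -/
theorem stmt_8 {n : ℕ} (f : EuclideanSpace ℝ (Fin n) → EReal)
    (hproper : ProperFn f) (hclosed : LowerSemicontinuous f)
    (xbar : EuclideanSpace ℝ (Fin n)) (hxbar : xbar ∈ subdiffDom f)
    (α : ℝ) (hα0 : 1/2 ≤ α) (hα1 : α < 1) (hKL : KLAt f xbar α)
    (β : ℝ) (hβ : 0 < β)
    (F : WithLp 2 (EuclideanSpace ℝ (Fin n) × EuclideanSpace ℝ (Fin n)) → EReal)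
    (hF : ∀ p, F p =
      f (WithLp.equiv 2 (EuclideanSpace ℝ (Fin n) × EuclideanSpace ℝ (Fin n)) p).1 +
        ((β/2 * ‖(WithLp.equiv 2 (EuclideanSpace ℝ (Fin n) × EuclideanSpace ℝ (Fin n)) p).1
          - (WithLp.equiv 2 (EuclideanSpace ℝ (Fin n) × EuclideanSpace ℝ (Fin n)) p).2‖^2 : ℝ) : EReal)) :
    KLAt F ((WithLp.equiv 2 (EuclideanSpace ℝ (Fin n) × EuclideanSpace ℝ (Fin n))).symm (xbar, xbar)) α := by
  classical
  obtain ⟨v0, hv0⟩ := hxbar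
  have hfb_top : f xbar ≠ ⊤ := hv0.1.ne
  have hfb_bot : f xbar ≠ ⊥ := hproper.1 xbar
  set fb := (f xbar).toReal with hfbdef
  have hfb_eq : (fb : EReal) = f xbar := EReal.coe_toReal hfb_top hfb_bot
  have hF' : ∀ p : WithLp 2 (EuclideanSpace ℝ (Fin n) × EuclideanSpace ℝ (Fin n)),
      F p = f p.fst + ((β/2 * ‖p.fst - p.snd‖^2 : ℝ) : EReal) := fun p => hF p
  obtain ⟨c, hc, ε, hε, ν, hν, hKLf⟩ := hKL
  set pbar := (WithLp.equiv 2 (EuclideanSpace ℝ (Fin n) × EuclideanSpace ℝ (Fin n))).symm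
    (xbar, xbar) with hpbardef
  have hFbar : F pbar = f xbar := by
    have h0 : pbar.fst - pbar.snd = 0 := sub_self xbar
    have h1 : pbar.fst = xbar := rfl
    rw [hF' pbar, h0, h1]
    simp
  set cF := min (c/4) (Real.sqrt (2*β)/2) with hcFdef
  have hcF0 : (0:ℝ) < cF := lt_min (by positivity) (by positivity)
  have hcF1 : cF ≤ c/4 := min_le_left _ _
  have hcF2 : cF ≤ Real.sqrt (2*β)/2 := min_le_right _ _
  refine ⟨cF, hcF0, ε, hε, min ν 1, lt_min hν (by norm_num), ?_⟩
  intro p hpnear hlow hupp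
  rw [EMetric.infEdist, EMetric.le_infEdist]
  intro v hv
  obtain ⟨hfxlt, humem, hw⟩ := aux_lim_pair f hproper β hβ F hF' p v hv
  have hfx_top : f p.fst ≠ ⊤ := hfxlt.ne
  have hfx_bot : f p.fst ≠ ⊥ := hproper.1 p.fst
  set fx := (f p.fst).toReal with hfxdef
  have hfx_eq : (fx : EReal) = f p.fst := EReal.coe_toReal hfx_top hfx_bot
  have hr0 : (0:ℝ) ≤ ‖p.fst - p.snd‖ := norm_nonneg _
  set r := ‖p.fst - p.snd‖ with hrdef
  set q := β/2 * r^2 with hqdef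
  have hq0 : (0:ℝ) ≤ q := by positivity
  have hFpe : F p = ((fx + q : ℝ) : EReal) := by
    rw [hF' p]
    conv_lhs => rw [← hfx_eq]
    rw [← EReal.coe_add]
  have hS : (F p - F pbar).toReal = fx + q - fb := by
    rw [hFpe, hFbar, ← hfb_eq, ← EReal.coe_sub, EReal.toReal_coe]
  have hSpos : 0 < fx + q - fb := by
    rw [hFbar, ← hfb_eq, hFpe] at hlow
    have := EReal.coe_lt_coe_iff.1 hlow
    linarith
  have hSlt1 : fx + q - fb < 1 := by
    have h1le : F p < (fb : EReal) + 1 := by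
      refine lt_of_lt_of_le hupp ?_
      rw [hFbar, ← hfb_eq]
      exact add_le_add_right (min_le_right ν 1) _
    rw [hFpe, show ((fb : ℝ) : EReal) + 1 = ((fb + 1 : ℝ) : EReal) by
      rw [EReal.coe_add, EReal.coe_one]] at h1le
    have := EReal.coe_lt_coe_iff.1 h1le
    linarith
  rw [hS, edist_dist, dist_zero_left]
  apply ENNReal.ofReal_le_ofReal
  -- now a purely real inequality
  have hv2 : ‖v.snd‖ = β * r := by
    rw [hw, norm_smul, Real.norm_eq_abs, abs_of_pos hβ, norm_sub_rev]
  have hm1 : β * r ≤ ‖v‖ := hv2 ▸ aux_snd_norm_le v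
  have hm2 : ‖v.fst‖ ≤ ‖v‖ := aux_fst_norm_le v
  have hmnn : (0:ℝ) ≤ ‖v‖ := norm_nonneg v
  have hsq : Real.sqrt (2*β) * Real.sqrt q = β * r := by
    rw [← Real.sqrt_mul (by positivity) q]
    have h : 2*β * q = (β*r)^2 := by rw [hqdef]; ring
    rw [h, Real.sqrt_sq (mul_nonneg hβ.le hr0)]
  have hq_sqrt : q ^ (1/2 : ℝ) = Real.sqrt q := (Real.sqrt_eq_rpow q).symm
  rcases le_or_gt fx fb with hcase | hcase
  · -- f x ≤ f xbar : use the second component only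
    have hSq : fx + q - fb ≤ q := by linarith
    have hS1 : (fx + q - fb) ^ α ≤ (fx + q - fb) ^ (1/2 : ℝ) :=
      Real.rpow_le_rpow_of_exponent_ge hSpos hSlt1.le hα0
    have hS2 : (fx + q - fb) ^ (1/2 : ℝ) ≤ q ^ (1/2 : ℝ) :=
      Real.rpow_le_rpow hSpos.le hSq (by norm_num)
    calc cF * (fx + q - fb) ^ α ≤ cF * (q ^ (1/2 : ℝ)) :=
          mul_le_mul_of_nonneg_left (le_trans hS1 hS2) hcF0.le
      _ = cF * Real.sqrt q := by rw [hq_sqrt]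
      _ ≤ (Real.sqrt (2*β)/2) * Real.sqrt q :=
          mul_le_mul_of_nonneg_right hcF2 (Real.sqrt_nonneg q)
      _ = (β * r)/2 := by rw [div_mul_eq_mul_div, hsq]
      _ ≤ β * r := by linarith [mul_nonneg hβ.le hr0]
      _ ≤ ‖v‖ := hm1
  · -- f xbar < f x : use the KL property of f
    have ha : 0 < fx - fb := by linarith
    have hnear1 : ‖p.fst - xbar‖ ≤ ε :=
      le_trans (aux_fst_norm_le (p - pbar)) hpnear
    have hlt : f xbar < f p.fst := by
      rw [← hfb_eq, ← hfx_eq]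
      exact EReal.coe_lt_coe_iff.2 hcase
    have hup : f p.fst < f xbar + ν := by
      have e1 : f p.fst ≤ F p := by
        rw [hFpe, ← hfx_eq]
        exact EReal.coe_le_coe_iff.2 (by linarith)
      refine lt_of_le_of_lt e1 (lt_of_lt_of_le hupp ?_)
      rw [hFbar]
      exact add_le_add_right (min_le_left ν 1) _
    have hKLres := hKLf p.fst hnear1 hlt hup
    have hTa : (f p.fst - f xbar).toReal = fx - fb := by
      rw [← hfx_eq, ← hfb_eq, ← EReal.coe_sub, EReal.toReal_coe]
    have hedist : ENNReal.ofReal (c * (fx - fb) ^ α)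
        ≤ edist 0 (v.fst - β • (p.fst - p.snd)) := by
      rw [← hTa]
      exact le_trans hKLres (EMetric.infEdist_le_edist_of_mem humem)
    rw [edist_dist, dist_zero_left] at hedist
    have hu1 : c * (fx - fb) ^ α ≤ ‖v.fst - β • (p.fst - p.snd)‖ :=
      (ENNReal.ofReal_le_ofReal_iff (norm_nonneg _)).1 hedist
    have hu2 : ‖v.fst - β • (p.fst - p.snd)‖ ≤ ‖v.fst‖ + β * r := by
      have h := norm_sub_le v.fst (β • (p.fst - p.snd))
      rwa [norm_smul, Real.norm_eq_abs, abs_of_pos hβ] at h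
    have hca : c * (fx - fb) ^ α ≤ 2 * ‖v‖ := by linarith
    have hqα : cF * q ^ α ≤ ‖v‖/2 := by
      rcases eq_or_lt_of_le hq0 with hq | hq
      · rw [← hq, Real.zero_rpow (by positivity), mul_zero]
        linarith
      · have hqS : q ≤ fx + q - fb := by linarith
        have hq1 : q < 1 := lt_of_le_of_lt hqS hSlt1
        have h1 : q ^ α ≤ q ^ (1/2 : ℝ) :=
          Real.rpow_le_rpow_of_exponent_ge hq hq1.le hα0
        calc cF * q ^ α ≤ cF * (q ^ (1/2 : ℝ)) := mul_le_mul_of_nonneg_left h1 hcF0.le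
          _ = cF * Real.sqrt q := by rw [hq_sqrt]
          _ ≤ (Real.sqrt (2*β)/2) * Real.sqrt q :=
              mul_le_mul_of_nonneg_right hcF2 (Real.sqrt_nonneg q)
          _ = (β * r)/2 := by rw [div_mul_eq_mul_div, hsq]
          _ ≤ ‖v‖/2 := by linarith
    have haα : cF * (fx - fb) ^ α ≤ ‖v‖/2 := by
      have h1 : cF * (fx - fb) ^ α ≤ (c/4) * (fx - fb) ^ α :=
        mul_le_mul_of_nonneg_right hcF1 (Real.rpow_nonneg ha.le α)
      have h2 : (c/4) * (fx - fb) ^ α = (c * (fx - fb) ^ α)/4 := by ring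
      linarith
    have hsplit : (fx + q - fb) ^ α ≤ (fx - fb) ^ α + q ^ α := by
      have h : fx + q - fb = (fx - fb) + q := by ring
      rw [h]
      exact aux_rpow_add_le (fx - fb) q α ha.le hq0 (by linarith) hα1.le
    calc cF * (fx + q - fb) ^ α ≤ cF * ((fx - fb) ^ α + q ^ α) :=
          mul_le_mul_of_nonneg_left hsplit hcF0.le
      _ = cF * (fx - fb) ^ α + cF * q ^ α := mul_add _ _ _
      _ ≤ ‖v‖/2 + ‖v‖/2 := add_le_add haα hqα
      _ = ‖v‖ := by ring

end
end

section
/- Let f := h + P, where h : ℝ^n → (−∞,∞] is a proper closed function with open domain that is continuously differentiable with locally Lipschitz continuous gradient on dom h, and P : ℝ^n → (−∞,∞] is proper closed convex, with dom h ∩ dom P ≠ ∅. Let 𝒳 := {x : 0 ∈ ∂f(x)} and suppose 𝒳 ≠ ∅. Assume: (a) for each x̄ ∈ 𝒳 there exists δ > 0 such that f(y) = f(x̄) whenever y ∈ 𝒳 and ‖y − x̄‖ ≤ δ; (b) the Luo-Tseng error bound holds: for every ζ ≥ inf f there exist c > 0 and ε > 0 such that dist(x, 𝒳) ≤ c‖prox_P(x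 − ∇h(x)) − x‖ whenever ‖prox_P(x − ∇h(x)) − x‖ < ε and f(x) ≤ ζ. Then f is a KL function with exponent 1/2. -/
open Filter Topology Metric Set
open scoped RealInnerProductSpace

noncomputable section

variable {E : Type*} [NormedAddCommGroup E] [InnerProductSpace ℝ E]

set_option linter.unusedSectionVars false

lemma lsc_min_on_compact {f : E → EReal} (hf : LowerSemicontinuous f) {s : Set E}
    (hs : IsCompact s) (hne : s.Nonempty) : ∃ w ∈ s, ∀ y ∈ s, f w ≤ f y := by
  by_contra hno
  push_neg at hno
  set m := sInf (f '' s) with hm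
  have hlt : ∀ x ∈ s, m < f x := by
    intro x hx
    obtain ⟨y, hy, hyx⟩ := hno x hx
    exact lt_of_le_of_lt (sInf_le ⟨y, hy, rfl⟩) hyx
  have key : ∀ x ∈ s, ∃ c : EReal, m < c ∧ c < f x := fun x hx => exists_between (hlt x hx)
  choose! c hc1 hc2 using key
  have hopen : ∀ x : E, IsOpen {y | c x < f y} := fun x => hf.isOpen_preimage (c x)
  have hcover : s ⊆ ⋃ x ∈ s, {y | c x < f y} := fun x hx => mem_biUnion hx (hc2 x hx)
  obtain ⟨t, hts, htfin, htcov⟩ := hs.elim_finite_subcover_image (fun x _ => hopen x) hcover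
  obtain ⟨x0, hx0⟩ := hne
  have htne : (htfin.toFinset).Nonempty := by
    rcases mem_iUnion₂.1 (htcov hx0) with ⟨i, hi, _⟩
    exact ⟨i, htfin.mem_toFinset.2 hi⟩
  obtain ⟨j, hj, hjeq⟩ := Finset.exists_mem_eq_inf' htne c
  have hjs : j ∈ s := hts (htfin.mem_toFinset.1 hj)
  have hlb : ∀ y ∈ s, c j ≤ f y := by
    intro y hy
    rcases mem_iUnion₂.1 (htcov hy) with ⟨i, hi, hyi⟩
    calc c j = (htfin.toFinset).inf' htne c := hjeq.symm
      _ ≤ c i := Finset.inf'_le c (htfin.mem_toFinset.2 hi)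
      _ ≤ f y := le_of_lt hyi
  have : c j ≤ m := le_sInf (by rintro b ⟨y, hy, rfl⟩; exact hlb y hy)
  exact absurd (lt_of_lt_of_le (hc1 j hjs) this) (lt_irrefl _)

lemma econvex_pointwise {P : E → EReal} (h : EConvex P) {x y : E}
    (hx1 : P x ≠ ⊤) (hx2 : P x ≠ ⊥) (hy1 : P y ≠ ⊤) (hy2 : P y ≠ ⊥)
    {t : ℝ} (ht0 : 0 ≤ t) (ht1 : t ≤ 1) :
    P ((1-t) • x + t • y) ≤ (((1-t) * (P x).toReal + t * (P y).toReal : ℝ) : EReal) := by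
  have hxm : (x, (P x).toReal) ∈ {p : E × ℝ | P p.1 ≤ (p.2 : EReal)} := by
    simp [EReal.coe_toReal hx1 hx2]
  have hym : (y, (P y).toReal) ∈ {p : E × ℝ | P p.1 ≤ (p.2 : EReal)} := by
    simp [EReal.coe_toReal hy1 hy2]
  have := h hxm hym (by linarith : (0:ℝ) ≤ 1 - t) ht0 (by ring)
  simpa [Prod.smul_mk, Prod.mk_add_mk, smul_eq_mul] using this

lemma prox_lt_top {P : E → EReal} (hPbot : ∀ x, P x ≠ ⊥) {y0 : E} (hy0 : P y0 ≠ ⊤)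
    {z w : E} (hw : IsProxPt P z w) : P w ≠ ⊤ := by
  intro htop
  have := hw y0
  rw [htop] at this
  rw [EReal.top_add_coe] at this
  have h2 : P y0 + ((1/2 * ‖y0 - z‖^2 : ℝ) : EReal) < ⊤ := by
    have := hPbot y0
    lift P y0 to ℝ using ⟨hy0, this⟩ with p
    rw [← EReal.coe_add]
    exact EReal.coe_lt_top _
  exact absurd (lt_of_le_of_lt this h2) (lt_irrefl _)

lemma prox_subgrad {P : E → EReal} (hPbot : ∀ x, P x ≠ ⊥) (hconv : EConvex P)
    {z w : E} (hw : IsProxPt P z w) (hwtop : P w ≠ ⊤) (y : E) :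
    (((P w).toReal + ⟪z - w, y - w⟫ : ℝ) : EReal) ≤ P y := by
  by_cases hy : P y = ⊤
  · rw [hy]; exact le_top
  -- real values
  set pw := (P w).toReal
  set py := (P y).toReal
  have hPw : P w = (pw : EReal) := (EReal.coe_toReal hwtop (hPbot w)).symm
  have hPy : P y = (py : EReal) := (EReal.coe_toReal hy (hPbot y)).symm
  rw [hPy, EReal.coe_le_coe_iff]
  have key : ∀ t : ℝ, 0 < t → t ≤ 1 → pw + ⟪z - w, y - w⟫ ≤ py + t/2 * ‖y - w‖^2 := by
    intro t ht0 ht1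
    have hyt := hw ((1-t) • w + t • y)
    have hcv := econvex_pointwise hconv hwtop (hPbot w) hy (hPbot y) ht0.le ht1
    have hbound : P ((1-t) • w + t • y) ≤ (((1-t) * pw + t * py : ℝ) : EReal) := hcv
    have hexp : ‖(1-t) • w + t • y - z‖^2
        = ‖w - z‖^2 + 2 * (t * ⟪w - z, y - w⟫) + t^2 * ‖y - w‖^2 := by
      have : (1-t) • w + t • y - z = (w - z) + t • (y - w) := by
        rw [sub_smul, one_smul, smul_sub]; abel
      rw [this, norm_add_sq_real, real_inner_smul_right, norm_smul]
      simp [mul_pow, abs_of_pos ht0]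
      try ring
    have hchain : P w + ((1/2 * ‖w - z‖^2 : ℝ) : EReal)
        ≤ (((1-t) * pw + t * py + 1/2 * ‖(1-t) • w + t • y - z‖^2 : ℝ) : EReal) := by
      refine le_trans hyt ?_
      rw [EReal.coe_add]
      exact add_le_add_left hbound _
    rw [hPw, ← EReal.coe_add, EReal.coe_le_coe_iff, hexp] at hchain
    have hinner : ⟪w - z, y - w⟫ = - ⟪z - w, y - w⟫ := by
      rw [← inner_neg_left]; congr 1; abel
    nlinarith [hchain, sq_nonneg t]
  -- take t → 0
  refine le_of_forall_pos_le_add ?_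
  intro ε hε
  rcases le_or_gt (‖y - w‖^2) 0 with hn | hn
  · have := key 1 one_pos le_rfl
    nlinarith
  · set t := min 1 (ε / ‖y - w‖^2) with htdef
    have ht0 : 0 < t := lt_min one_pos (div_pos hε hn)
    have ht1 : t ≤ 1 := min_le_left _ _
    have := key t ht0 ht1
    have h2 : t / 2 * ‖y - w‖^2 ≤ ε := by
      have : t ≤ ε / ‖y - w‖^2 := min_le_right _ _
      have h3 : t * ‖y - w‖^2 ≤ ε := by
        rw [← le_div_iff₀ hn] at *; linarith
      nlinarith
    linarith

lemma prox_nonexpansive {P : E → EReal} (hPbot : ∀ x, P x ≠ ⊥) (hconv : EConvex P)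
    {y0 : E} (hy0 : P y0 ≠ ⊤) {z1 z2 w1 w2 : E}
    (h1 : IsProxPt P z1 w1) (h2 : IsProxPt P z2 w2) : ‖w1 - w2‖ ≤ ‖z1 - z2‖ := by
  have ht1 := prox_lt_top hPbot hy0 h1
  have ht2 := prox_lt_top hPbot hy0 h2
  have s1 := prox_subgrad hPbot hconv h1 ht1 w2
  have s2 := prox_subgrad hPbot hconv h2 ht2 w1
  rw [← EReal.coe_toReal ht2 (hPbot w2), EReal.coe_le_coe_iff] at s1
  rw [← EReal.coe_toReal ht1 (hPbot w1), EReal.coe_le_coe_iff] at s2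
  have hadd : ⟪z1 - w1, w2 - w1⟫ + ⟪z2 - w2, w1 - w2⟫ ≤ 0 := by linarith
  have e1 : ⟪z1 - w1, w2 - w1⟫ = -⟪z1 - w1, w1 - w2⟫ := by
    rw [← inner_neg_right]; congr 1; abel
  have e2 : -⟪z1 - w1, w1 - w2⟫ + ⟪z2 - w2, w1 - w2⟫
      = ⟪(w1 - w2) - (z1 - z2), w1 - w2⟫ := by
    have e3 : (w1 - w2) - (z1 - z2) = (z2 - w2) - (z1 - w1) := by abel
    rw [e3]; simp [inner_sub_left]; ring
  have e4 : ⟪(w1 - w2) - (z1 - z2), w1 - w2⟫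
      = ‖w1 - w2‖^2 - ⟪z1 - z2, w1 - w2⟫ := by
    rw [inner_sub_left, real_inner_self_eq_norm_sq]
  have key : ‖w1 - w2‖^2 ≤ ⟪z1 - z2, w1 - w2⟫ := by
    rw [e1, e2, e4] at hadd; linarith
  have hcs := real_inner_le_norm (z1 - z2) (w1 - w2)
  nlinarith [norm_nonneg (w1 - w2), norm_nonneg (z1 - z2)]

lemma prox_exists_s10 [ProperSpace E] {P : E → EReal} (hPbot : ∀ x, P x ≠ ⊥)
    (hlsc : LowerSemicontinuous P) {x0 u0 : E} (hx0 : P x0 ≠ ⊤)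
    (hsub : ∀ y, (((P x0).toReal + ⟪u0, y - x0⟫ : ℝ) : EReal) ≤ P y) (z : E) :
    ∃ w, IsProxPt P z w := by
  set q : E → ℝ := fun y => 1/2 * ‖y - z‖^2 with hq
  set g : E → EReal := fun y => P y + ((q y : ℝ) : EReal) with hg
  have hcont : Continuous (fun y => ((q y : ℝ) : EReal)) := by
    apply Continuous.comp continuous_coe_real_ereal; fun_prop
  have hg_lsc : LowerSemicontinuous g := by
    apply hlsc.add' hcont.lowerSemicontinuous
    intro x
    exact EReal.continuousAt_add (Or.inr (EReal.coe_ne_bot _)) (Or.inl (hPbot x))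
  set R : ℝ := 2*‖u0‖ + 2*‖x0 - z‖ + 2 with hR
  have hRpos : 0 < R := by positivity
  have hx0K : x0 ∈ closedBall z R := by
    rw [mem_closedBall, dist_eq_norm]
    have := norm_nonneg u0; linarith
  obtain ⟨w, hwK, hwmin⟩ := lsc_min_on_compact hg_lsc (isCompact_closedBall z R) ⟨x0, hx0K⟩
  refine ⟨w, fun y => ?_⟩
  by_cases hyK : y ∈ closedBall z R
  · exact hwmin y hyK
  · refine le_trans (hwmin x0 hx0K) ?_
    -- g x0 ≤ g y
    have hry : R < ‖y - z‖ := by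
      rw [mem_closedBall, dist_eq_norm] at hyK; linarith [not_le.1 hyK]
    set px0 := (P x0).toReal with hpx0
    have hcoe : P x0 = (px0 : EReal) := (EReal.coe_toReal hx0 (hPbot x0)).symm
    have hlow : ((px0 + ⟪u0, y - x0⟫ + q y : ℝ) : EReal) ≤ g y := by
      rw [EReal.coe_add]
      exact add_le_add_left (hsub y) _
    refine le_trans ?_ hlow
    have hgx0 : g x0 = ((px0 + q x0 : ℝ) : EReal) := by
      show P x0 + ((q x0 : ℝ) : EReal) = _
      rw [hcoe, ← EReal.coe_add]
    rw [hgx0, EReal.coe_le_coe_iff]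
    have hip : -(‖u0‖ * (‖y - z‖ + ‖z - x0‖)) ≤ ⟪u0, y - x0⟫ := by
      have h1 := abs_real_inner_le_norm u0 (y - x0)
      have h2 : ‖y - x0‖ ≤ ‖y - z‖ + ‖z - x0‖ := by
        have := norm_add_le (y - z) (z - x0)
        rw [sub_add_sub_cancel] at this
        exact this
      have h3 := mul_le_mul_of_nonneg_left h2 (norm_nonneg u0)
      have h4 := neg_abs_le (⟪u0, y - x0⟫)
      linarith
    have hzx : ‖z - x0‖ = ‖x0 - z‖ := norm_sub_rev _ _
    rw [hzx] at hip
    have hqx : q x0 = 1/2 * ‖x0 - z‖^2 := rfl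
    have hqy : q y = 1/2 * ‖y - z‖^2 := rfl
    rw [hqx, hqy]
    nlinarith [norm_nonneg u0, norm_nonneg (x0 - z), norm_nonneg (y - z),
      mul_le_mul_of_nonneg_right hry.le (norm_nonneg (y - z)),
      mul_le_mul_of_nonneg_left hry.le (norm_nonneg (x0 - z)),
      mul_le_mul_of_nonneg_left hry.le (norm_nonneg u0)]

lemma add_lt_top_parts {a b : EReal} (ha : a ≠ ⊥) (hb : b ≠ ⊥) (hab : a + b < ⊤) :
    a ≠ ⊤ ∧ b ≠ ⊤ := by
  constructor
  · intro hA; rw [hA, EReal.top_add_of_ne_bot hb] at hab; exact absurd hab (lt_irrefl _)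
  · intro hB; rw [hB, EReal.add_top_of_ne_bot ha] at hab; exact absurd hab (lt_irrefl _)

lemma regSubdiff_subgrad_s10 [CompleteSpace E] {h P f : E → EReal} (hsum : ∀ x, f x = h x + P x)
    (hhbot : ∀ x, h x ≠ ⊥) (hPbot : ∀ x, P x ≠ ⊥)
    (hopen : IsOpen (edomain h)) {h' : E → E}
    (hgrad : ∀ x ∈ edomain h, HasGradientAt (fun y => (h y).toReal) (h' x) x)
    (hconv : EConvex P) {x v : E} (hv : v ∈ regSubdiff f x) :
    ∀ y, (((P x).toReal + ⟪v - h' x, y - x⟫ : ℝ) : EReal) ≤ P y := by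
  intro y
  obtain ⟨hfx, hvineq⟩ := hv
  have hfxsum := hsum x
  have hparts : h x ≠ ⊤ ∧ P x ≠ ⊤ := add_lt_top_parts (hhbot x) (hPbot x) (hfxsum ▸ hfx)
  obtain ⟨hhx, hPx⟩ := hparts
  have hxdom : x ∈ edomain h := lt_of_le_of_ne le_top hhx
  by_cases hy : P y = ⊤
  · rw [hy]; exact le_top
  set px := (P x).toReal with hpx
  set py := (P y).toReal with hpy
  set hxr := (h x).toReal with hhxr
  have hPxc : P x = (px : EReal) := (EReal.coe_toReal hPx (hPbot x)).symm
  have hPyc : P y = (py : EReal) := (EReal.coe_toReal hy (hPbot y)).symm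
  have hhxc : h x = (hxr : EReal) := (EReal.coe_toReal hhx (hhbot x)).symm
  rw [hPyc, EReal.coe_le_coe_iff]
  set d := y - x with hd
  -- derivative of t ↦ h(x + t d) at 0
  have hder : HasDerivAt (fun t : ℝ => (h (x + t • d)).toReal) ⟪h' x, d⟫ 0 := by
    have hc : HasDerivAt (fun t : ℝ => x + t • d) d 0 := by
      simpa using ((hasDerivAt_id (0:ℝ)).smul_const d).const_add x
    have hg := (hgrad x hxdom).hasFDerivAt
    have hg' : HasFDerivAt (fun y => (h y).toReal)
        ((InnerProductSpace.toDual ℝ E) (h' x)) (x + (0:ℝ) • d) := by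
      simpa using hg
    have := hg'.comp_hasDerivAt (0:ℝ) hc
    simpa [Function.comp_def] using this
  have hslope : Tendsto (fun t : ℝ => ((h (x + t • d)).toReal - hxr) / t)
      (𝓝[>] (0:ℝ)) (𝓝 ⟪h' x, d⟫) := by
    have := hasDerivAt_iff_tendsto_slope.1 hder
    have h2 := this.mono_left (nhdsWithin_mono _ (fun t (ht : t ∈ Ioi (0:ℝ)) => ne_of_gt ht))
    refine h2.congr (fun t => ?_)
    simp [slope_def_field, hhxr, div_eq_inv_mul]
  -- key bound for each ε > 0
  have key : ∀ ε : ℝ, 0 < ε → px + ⟪v - h' x, d⟫ ≤ py + ε * (‖d‖ + 1) := by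
    intro ε hε
    have hev := hvineq ε hε
    have hzt : Tendsto (fun t : ℝ => x + t • d) (𝓝[>] (0:ℝ)) (𝓝 x) := by
      have : Tendsto (fun t : ℝ => x + t • d) (𝓝 (0:ℝ)) (𝓝 x) := by
        have : Continuous (fun t : ℝ => x + t • d) :=
          continuous_const.add (continuous_id.smul continuous_const)
        simpa using this.tendsto 0
      exact this.mono_left nhdsWithin_le_nhds
    have hev1 : ∀ᶠ t : ℝ in 𝓝[>] 0,
        f x + ((⟪v, (x + t • d) - x⟫ - ε * ‖(x + t • d) - x‖ : ℝ) : EReal) ≤ f (x + t • d) :=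
      hzt.eventually hev
    have hev2 : ∀ᶠ t : ℝ in 𝓝[>] 0, x + t • d ∈ edomain h :=
      hzt.eventually (hopen.mem_nhds hxdom)
    have hev3 : ∀ᶠ t : ℝ in 𝓝[>] 0, t ∈ Ioc (0:ℝ) 1 := by
      have : Ioc (0:ℝ) 1 ∈ 𝓝[>] (0:ℝ) := by
        apply Ioc_mem_nhdsGT_of_mem
        exact ⟨le_refl _, one_pos⟩
      exact this
    have hevfinal : ∀ᶠ t : ℝ in 𝓝[>] 0,
        ⟪v, d⟫ - ε * ‖d‖ - py + px ≤ ((h (x + t • d)).toReal - hxr) / t := by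
      filter_upwards [hev1, hev2, hev3] with t h1 h2 h3
      obtain ⟨ht0, ht1⟩ := h3
      -- convexity bound
      have hcomb : x + t • d = (1 - t) • x + t • y := by
        rw [hd]; rw [sub_smul, one_smul, smul_sub]; abel
      have hPz : P (x + t • d) ≤ (((1-t) * px + t * py : ℝ) : EReal) := by
        rw [hcomb]; exact econvex_pointwise hconv hPx (hPbot x) hy (hPbot y) ht0.le ht1
      have hzd : (x + t • d) - x = t • d := by abel
      have hnorm : ‖(x + t • d) - x‖ = t * ‖d‖ := by
        rw [hzd, norm_smul, Real.norm_eq_abs, abs_of_pos ht0]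
      have hinner : ⟪v, (x + t • d) - x⟫ = t * ⟪v, d⟫ := by
        rw [hzd, real_inner_smul_right]
      rw [hsum x, hsum (x + t • d), hinner, hnorm] at h1
      have hhz : h (x + t • d) = (((h (x + t • d)).toReal : ℝ) : EReal) :=
        (EReal.coe_toReal (ne_of_lt h2) (hhbot _)).symm
      have e0 : ((hxr + px + (t * ⟪v, d⟫ - ε * (t * ‖d‖)) : ℝ) : EReal)
          = (h x + P x) + ((t * ⟪v, d⟫ - ε * (t * ‖d‖) : ℝ) : EReal) := by
        rw [hhxc, hPxc, ← EReal.coe_add, ← EReal.coe_add]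
      have e1 : (((h (x + t • d)).toReal + ((1-t) * px + t * py) : ℝ) : EReal)
          = h (x + t • d) + (((1-t) * px + t * py : ℝ) : EReal) := by
        rw [EReal.coe_add, ← hhz]
      have hchain : ((hxr + px + (t * ⟪v, d⟫ - ε * (t * ‖d‖)) : ℝ) : EReal)
          ≤ (((h (x + t • d)).toReal + ((1-t) * px + t * py) : ℝ) : EReal) := by
        rw [e0, e1]
        exact le_trans h1 (add_le_add_right hPz _)
      rw [EReal.coe_le_coe_iff] at hchain
      have ht0' : 0 < t⁻¹ := inv_pos.2 ht0
      have hnn : 0 ≤ ((h (x + t • d)).toReal + ((1-t) * px + t * py))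
          - (hxr + px + (t * ⟪v, d⟫ - ε * (t * ‖d‖))) := sub_nonneg.2 hchain
      have expand : ((h (x + t • d)).toReal - hxr) / t - (⟪v, d⟫ - ε * ‖d‖ - py + px)
          = t⁻¹ * (((h (x + t • d)).toReal + ((1-t) * px + t * py))
              - (hxr + px + (t * ⟪v, d⟫ - ε * (t * ‖d‖)))) := by
        field_simp
        ring
      rw [← sub_nonneg, expand]
      exact mul_nonneg ht0'.le hnn
    have hlim := ge_of_tendsto hslope hevfinal
    have : px + ⟪v - h' x, d⟫ ≤ py + ε * ‖d‖ := by
      rw [inner_sub_left] at *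
      linarith
    have : ε * ‖d‖ ≤ ε * (‖d‖ + 1) := by nlinarith
    linarith
  -- let ε → 0
  refine le_of_forall_pos_le_add ?_
  intro ε hε
  have hpos : 0 < ε / (‖d‖ + 1) := by positivity
  have := key _ hpos
  have hne : ‖d‖ + 1 ≠ 0 := by positivity
  rw [div_mul_cancel₀ _ hne] at this
  exact this

lemma limSubdiff_subgrad_s10 [CompleteSpace E] {h P f : E → EReal} (hsum : ∀ x, f x = h x + P x)
    (hhbot : ∀ x, h x ≠ ⊥) (hPbot : ∀ x, P x ≠ ⊥)
    (hopen : IsOpen (edomain h)) {h' : E → E}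
    (hgrad : ∀ x ∈ edomain h, HasGradientAt (fun y => (h y).toReal) (h' x) x)
    (hgradcont : ContinuousOn h' (edomain h))
    (hconv : EConvex P) {x v : E} (hv : v ∈ limSubdiff f x) :
    ∀ y, (((P x).toReal + ⟪v - h' x, y - x⟫ : ℝ) : EReal) ≤ P y := by
  intro y
  obtain ⟨hfx, xs, vs, hxs, hfxs, hvs, hreg⟩ := hv
  have hfbot : ∀ z, f z ≠ ⊥ := by
    intro z hz
    rw [hsum z, EReal.add_eq_bot_iff] at hz
    exact hz.elim (hhbot z) (hPbot z)
  have hparts := add_lt_top_parts (hhbot x) (hPbot x) ((hsum x) ▸ hfx)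
  obtain ⟨hhx, hPx⟩ := hparts
  have hxdom : x ∈ edomain h := lt_of_le_of_ne le_top hhx
  by_cases hy : P y = ⊤
  · rw [hy]; exact le_top
  have hPyc : P y = (((P y).toReal : ℝ) : EReal) := (EReal.coe_toReal hy (hPbot y)).symm
  rw [hPyc, EReal.coe_le_coe_iff]
  -- eventual domain membership
  have hevdom : ∀ᶠ t in atTop, xs t ∈ edomain h := hxs.eventually (hopen.mem_nhds hxdom)
  -- pointwise bound from regular subgradient
  have hbnd : ∀ t, ((P (xs t)).toReal + ⟪vs t - h' (xs t), y - xs t⟫ : ℝ) ≤ (P y).toReal := by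
    intro t
    have := regSubdiff_subgrad_s10 hsum hhbot hPbot hopen hgrad hconv (hreg t) y
    rw [hPyc, EReal.coe_le_coe_iff] at this
    exact this
  -- continuity of h ∘ toReal at x
  have hhcont : ContinuousAt (fun z => (h z).toReal) x := (hgrad x hxdom).continuousAt
  have hhlim : Tendsto (fun t => (h (xs t)).toReal) atTop (𝓝 ((h x).toReal)) :=
    hhcont.tendsto.comp hxs
  -- f toReal limit
  have hflim : Tendsto (fun t => (f (xs t)).toReal) atTop (𝓝 ((f x).toReal)) :=
    (EReal.tendsto_toReal (ne_of_lt hfx) (hfbot x)).comp hfxs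
  -- P toReal limit
  have hPeq : ∀ᶠ t in atTop, (P (xs t)).toReal = (f (xs t)).toReal - (h (xs t)).toReal := by
    filter_upwards [hevdom] with t ht
    have hft : f (xs t) < ⊤ := (hreg t).1
    have hp := add_lt_top_parts (hhbot (xs t)) (hPbot (xs t)) ((hsum (xs t)) ▸ hft)
    rw [hsum (xs t), EReal.toReal_add hp.1 (hhbot (xs t)) hp.2 (hPbot (xs t))]
    ring
  have hPxeq : (P x).toReal = (f x).toReal - (h x).toReal := by
    rw [hsum x, EReal.toReal_add hhx (hhbot x) hPx (hPbot x)]; ring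
  have hPlim : Tendsto (fun t => (P (xs t)).toReal) atTop (𝓝 ((P x).toReal)) := by
    rw [hPxeq]
    exact (hflim.sub hhlim).congr' (by filter_upwards [hPeq] with t ht using ht.symm)
  -- gradient limit
  have hglim : Tendsto (fun t => h' (xs t)) atTop (𝓝 (h' x)) := by
    have : ContinuousAt h' x := hgradcont.continuousAt (hopen.mem_nhds hxdom)
    exact this.tendsto.comp hxs
  -- inner limit
  have hinlim : Tendsto (fun t => (⟪vs t - h' (xs t), y - xs t⟫ : ℝ)) atTop
      (𝓝 ⟪v - h' x, y - x⟫) :=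
    (hvs.sub hglim).inner (tendsto_const_nhds.sub hxs)
  exact le_of_tendsto (hPlim.add hinlim) (Eventually.of_forall hbnd)

lemma descent_lemma [CompleteSpace E] {h : E → EReal} {h' : E → E} {s : Set E} (hs : Convex ℝ s)
    (hgrad : ∀ x ∈ s, HasGradientAt (fun y => (h y).toReal) (h' x) x)
    {L : NNReal} (hlip : LipschitzOnWith L h' s) {a b : E} (ha : a ∈ s) (hb : b ∈ s) :
    |(h b).toReal - (h a).toReal - ⟪h' a, b - a⟫| ≤ (L : ℝ) * ‖b - a‖^2 := by
  set D := InnerProductSpace.toDual ℝ E with hD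
  set g : E → ℝ := fun y => (h y).toReal - ⟪h' a, y⟫ with hg
  set g' : E → (E →L[ℝ] ℝ) := fun y => (D (h' y) : E →L[ℝ] ℝ) - (D (h' a) : E →L[ℝ] ℝ) with hg'
  have hseg : segment ℝ a b ⊆ s := hs.segment_subset ha hb
  have hgderiv : ∀ y ∈ segment ℝ a b, HasFDerivWithinAt g (g' y) (segment ℝ a b) y := by
    intro y hy
    have h1 : HasFDerivAt (fun z => (h z).toReal) (D (h' y) : E →L[ℝ] ℝ) y :=
      (hgrad y (hseg hy)).hasFDerivAt
    have h2 : HasFDerivAt (fun z : E => (⟪h' a, z⟫ : ℝ)) (D (h' a) : E →L[ℝ] ℝ) y := by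
      have := (D (h' a)).hasFDerivAt (x := y)
      exact this
    exact (h1.sub h2).hasFDerivWithinAt
  have hbound : ∀ y ∈ segment ℝ a b, ‖g' y‖ ≤ (L : ℝ) * ‖b - a‖ := by
    intro y hy
    have h1 : ‖g' y‖ = ‖h' y - h' a‖ := by
      show ‖(D (h' y) : E →L[ℝ] ℝ) - (D (h' a) : E →L[ℝ] ℝ)‖ = _
      rw [show (D (h' y) : E →L[ℝ] ℝ) - (D (h' a) : E →L[ℝ] ℝ) = (D (h' y - h' a) : E →L[ℝ] ℝ) by
        simp [map_sub]]
      exact D.norm_map _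
    rw [h1]
    have h2 : dist (h' y) (h' a) ≤ (L : ℝ) * dist y a := hlip.dist_le_mul y (hseg hy) a ha
    rw [dist_eq_norm, dist_eq_norm] at h2
    refine h2.trans ?_
    have : ‖y - a‖ ≤ ‖b - a‖ := by
      obtain ⟨t1, t2, ht1, ht2, hsum, rfl⟩ := hy
      have : t1 • a + t2 • b - a = t2 • (b - a) := by
        have ht : t1 = 1 - t2 := by linarith
        rw [ht, sub_smul, one_smul, smul_sub]; abel
      rw [this, norm_smul, Real.norm_eq_abs, abs_of_nonneg ht2]
      nlinarith [norm_nonneg (b - a)]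
    nlinarith [NNReal.coe_nonneg L]
  have hkey := (convex_segment a b).norm_image_sub_le_of_norm_hasFDerivWithin_le
    hgderiv hbound (left_mem_segment ℝ a b) (right_mem_segment ℝ a b)
  have hgb : g b - g a = (h b).toReal - (h a).toReal - ⟪h' a, b - a⟫ := by
    rw [hg]; simp [inner_sub_right]; ring
  rw [Real.norm_eq_abs, hgb] at hkey
  calc |(h b).toReal - (h a).toReal - ⟪h' a, b - a⟫| ≤ (L : ℝ) * ‖b - a‖ * ‖b - a‖ := hkey
    _ = (L : ℝ) * ‖b - a‖^2 := by ring

lemma one_div_nat_succ_tendsto : Tendsto (fun m : ℕ => 1/((m:ℝ)+1)) atTop (𝓝 0) :=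
  tendsto_one_div_add_atTop_nhds_zero_nat

lemma KLAt_of_not_stationary [CompleteSpace E] {f : E → EReal} (hfbot : ∀ z, f z ≠ ⊥) {xbar : E}
    (hdom : xbar ∈ subdiffDom f) (hns : (0 : E) ∉ limSubdiff f xbar) : KLAt f xbar (1/2) := by
  obtain ⟨v0, hv0⟩ := hdom
  have hftop : f xbar < ⊤ := hv0.1
  set r := (f xbar).toReal with hr
  have hfc : f xbar = (r : EReal) := (EReal.coe_toReal (ne_of_lt hftop) (hfbot xbar)).symm
  have claim : ∃ m : ℕ, ∀ x v : E, ‖x - xbar‖ ≤ 1/((m:ℝ)+1) → f xbar < f x →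
      f x < f xbar + ((1/((m:ℝ)+1) : ℝ) : EReal) → v ∈ limSubdiff f x → 1/((m:ℝ)+1) ≤ ‖v‖ := by
    by_contra hc
    push_neg at hc
    choose xs vs hxs1 hxs2 hxs3 hxs4 hxs5 using hc
    -- each f (xs m) is finite
    have hfin : ∀ m : ℕ, f (xs m) = (((f (xs m)).toReal : ℝ) : EReal) := by
      intro m
      have h1 : f (xs m) < ⊤ := by
        refine lt_of_lt_of_le (hxs3 m) ?_
        rw [hfc, ← EReal.coe_add]
        exact le_top
      exact (EReal.coe_toReal (ne_of_lt h1) (hfbot _)).symm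
    have hext : ∀ m : ℕ, ∃ (y w : E), ‖y - xs m‖ ≤ 1/((m:ℝ)+1) ∧ w ∈ regSubdiff f y ∧
        ‖w - vs m‖ ≤ 1/((m:ℝ)+1) ∧
        |(f y).toReal - (f (xs m)).toReal| ≤ 2/((m:ℝ)+1) ∧ f y = (((f y).toReal : ℝ) : EReal) := by
      intro m
      obtain ⟨hfxm, ys, ws, hys, hfys, hws, hwreg⟩ := hxs4 m
      have hm1 : (0:ℝ) < 1/((m:ℝ)+1) := by positivity
      set am := (f (xs m)).toReal with ham
      have e1 : ∀ᶠ t in atTop, ‖ys t - xs m‖ ≤ 1/((m:ℝ)+1) := by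
        have := hys.eventually (Metric.closedBall_mem_nhds (xs m) hm1)
        filter_upwards [this] with t ht
        rwa [dist_eq_norm] at ht
      have e2 : ∀ᶠ t in atTop, ‖ws t - vs m‖ ≤ 1/((m:ℝ)+1) := by
        have := hws.eventually (Metric.closedBall_mem_nhds (vs m) hm1)
        filter_upwards [this] with t ht
        rwa [dist_eq_norm] at ht
      have e3 : ∀ᶠ t in atTop,
          f (ys t) ∈ Ioo (((am - 1/((m:ℝ)+1) : ℝ)) : EReal) (((am + 1/((m:ℝ)+1) : ℝ)) : EReal) := by
        apply hfys.eventually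
        apply Ioo_mem_nhds
        · rw [hfin m]; exact_mod_cast (by linarith : am - 1/((m:ℝ)+1) < am)
        · rw [hfin m]; exact_mod_cast (by linarith : am < am + 1/((m:ℝ)+1))
      obtain ⟨t, ht1, ht2a, ht2b⟩ := (e1.and (e2.and e3)).exists
      refine ⟨ys t, ws t, ht1, hwreg t, ht2a, ?_, ?_⟩
      · obtain ⟨hlo, hhi⟩ := ht2b
        have hfyt : f (ys t) = (((f (ys t)).toReal : ℝ) : EReal) := by
          have htop : f (ys t) < ⊤ := lt_of_lt_of_le hhi le_top
          exact (EReal.coe_toReal (ne_of_lt htop) (hfbot _)).symm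
        rw [hfyt, EReal.coe_lt_coe_iff] at hlo hhi
        have h2m : 2/((m:ℝ)+1) = 2*(1/((m:ℝ)+1)) := by ring
        rw [abs_le]; constructor <;> linarith
      · obtain ⟨hlo, hhi⟩ := ht2b
        have htop : f (ys t) < ⊤ := lt_of_lt_of_le hhi le_top
        exact (EReal.coe_toReal (ne_of_lt htop) (hfbot _)).symm
    choose y w hy1 hy2 hy3 hy4 hy5 using hext
    -- limits
    have hlim0 := one_div_nat_succ_tendsto
    have hxslim : Tendsto xs atTop (𝓝 xbar) := by
      rw [tendsto_iff_dist_tendsto_zero]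
      refine squeeze_zero (fun m => dist_nonneg) (fun m => ?_) hlim0
      rw [dist_eq_norm]; exact hxs1 m
    have hylim : Tendsto y atTop (𝓝 xbar) := by
      rw [tendsto_iff_dist_tendsto_zero]
      have h2 : Tendsto (fun m : ℕ => 1/((m:ℝ)+1) + dist (xs m) xbar) atTop (𝓝 (0 + 0)) := by
        refine hlim0.add ?_
        exact (tendsto_iff_dist_tendsto_zero.1 hxslim)
      rw [add_zero] at h2
      refine squeeze_zero (fun m => dist_nonneg) (fun m => ?_) h2
      calc dist (y m) xbar ≤ dist (y m) (xs m) + dist (xs m) xbar := dist_triangle _ _ _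
        _ ≤ 1/((m:ℝ)+1) + dist (xs m) xbar := by
            rw [dist_eq_norm]; exact add_le_add_left (hy1 m) _
    have hwlim : Tendsto w atTop (𝓝 (0:E)) := by
      rw [tendsto_iff_dist_tendsto_zero]
      have h2 : Tendsto (fun m : ℕ => 1/((m:ℝ)+1) + 1/((m:ℝ)+1)) atTop (𝓝 (0 + 0)) :=
        hlim0.add hlim0
      rw [add_zero] at h2
      refine squeeze_zero (fun m => dist_nonneg) (fun m => ?_) h2
      calc dist (w m) 0 = ‖w m‖ := by rw [dist_eq_norm, sub_zero]
        _ ≤ ‖w m - vs m‖ + ‖vs m‖ := by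
            have := norm_add_le (w m - vs m) (vs m); rwa [sub_add_cancel] at this
        _ ≤ 1/((m:ℝ)+1) + 1/((m:ℝ)+1) := by
            exact add_le_add (hy3 m) (le_of_lt (hxs5 m))
    -- f (y m) → f xbar
    have hfxsr : Tendsto (fun m => (f (xs m)).toReal) atTop (𝓝 r) := by
      have : Tendsto (fun m => f (xs m)) atTop (𝓝 (f xbar)) := by
        -- squeeze in EReal: f xbar < f (xs m) < f xbar + 1/(m+1)
        have hupper : ∀ m : ℕ, (f (xs m)).toReal - r ≤ 1/((m:ℝ)+1) := by
          intro m
          have := hxs3 m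
          rw [hfin m, hfc, ← EReal.coe_add, EReal.coe_lt_coe_iff] at this
          linarith
        have hlower : ∀ m : ℕ, 0 ≤ (f (xs m)).toReal - r := by
          intro m
          have := hxs2 m
          rw [hfin m, hfc, EReal.coe_lt_coe_iff] at this
          linarith
        have hto : Tendsto (fun m => (f (xs m)).toReal) atTop (𝓝 r) := by
          have hs : Tendsto (fun m : ℕ => (f (xs m)).toReal - r) atTop (𝓝 0) :=
            squeeze_zero hlower hupper hlim0
          have := hs.add (tendsto_const_nhds (x := r))
          simpa using this
        rw [hfc]
        have := (continuous_coe_real_ereal.tendsto r).comp hto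
        refine this.congr (fun m => ?_)
        exact (hfin m).symm
      exact (EReal.tendsto_toReal (ne_of_lt hftop) (hfbot xbar)).comp this
    have hfylim : Tendsto (fun m => f (y m)) atTop (𝓝 (f xbar)) := by
      have hyr : Tendsto (fun m => (f (y m)).toReal) atTop (𝓝 r) := by
        have h2' : Tendsto (fun m : ℕ => 2/((m:ℝ)+1)) atTop (𝓝 0) := by
          have := hlim0.const_mul (2:ℝ)
          simpa [div_eq_mul_inv] using this
        have h3 : Tendsto (fun m : ℕ => (f (y m)).toReal - (f (xs m)).toReal) atTop (𝓝 0) :=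
          squeeze_zero_norm (fun m => by simpa [Real.norm_eq_abs] using hy4 m) h2'
        have := h3.add hfxsr
        simpa using this
      rw [hfc]
      have := (continuous_coe_real_ereal.tendsto r).comp hyr
      refine this.congr (fun m => ?_)
      exact (hy5 m).symm
    exact hns ⟨hftop, y, w, hylim, hfylim, hwlim, hy2⟩
  -- use the claim
  obtain ⟨m, hm⟩ := claim
  set cm := 1/((m:ℝ)+1) with hcm
  have hcmpos : 0 < cm := by positivity
  have hcm1 : cm ≤ 1 := by
    rw [hcm]
    rw [div_le_one (by positivity)]
    linarith [Nat.cast_nonneg (α := ℝ) m]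
  refine ⟨cm, hcmpos, cm, hcmpos, ((cm : ℝ) : EReal), by exact_mod_cast hcmpos, ?_⟩
  intro x hx1 hx2 hx3
  refine Metric.le_infEDist.2 ?_
  intro v hv
  have hvnorm : cm ≤ ‖v‖ := hm x v hx1 hx2 hx3 hv
  have hxtop : f x < ⊤ := lt_of_lt_of_le hx3 (by rw [hfc, ← EReal.coe_add]; exact le_top)
  have hfxfin : f x = (((f x).toReal : ℝ) : EReal) :=
    (EReal.coe_toReal (ne_of_lt hxtop) (hfbot x)).symm
  set s := (f x - f xbar).toReal with hs
  have hseq : s = (f x).toReal - r := by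
    rw [hs, EReal.toReal_sub (ne_of_lt hxtop) (hfbot x) (ne_of_lt hftop) (hfbot xbar)]
  have hs0 : 0 ≤ s := by
    rw [hseq]
    have := hx2
    rw [hfxfin, hfc, EReal.coe_lt_coe_iff] at this
    linarith
  have hs1 : s ≤ 1 := by
    have := hx3
    rw [hfxfin, hfc, ← EReal.coe_add, EReal.coe_lt_coe_iff] at this
    rw [hseq]; linarith
  have hpow : s ^ ((1:ℝ)/2) ≤ 1 := Real.rpow_le_one hs0 hs1 (by norm_num)
  have hfinal : cm * s ^ ((1:ℝ)/2) ≤ ‖v‖ := by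
    nlinarith
  have hedist : edist (0:E) v = ENNReal.ofReal ‖v‖ := by
    rw [edist_dist, dist_eq_norm, zero_sub, norm_neg]
  rw [hedist]
  exact ENNReal.ofReal_le_ofReal hfinal

lemma isProxPt_self {P : E → EReal} (hPbot : ∀ x, P x ≠ ⊥) {x u : E} (hx : P x ≠ ⊤)
    (hsub : ∀ y, (((P x).toReal + ⟪u, y - x⟫ : ℝ) : EReal) ≤ P y) : IsProxPt P (x + u) x := by
  intro y
  have hxz : x - (x + u) = -u := by abel
  by_cases hy : P y = ⊤
  · rw [hy, EReal.top_add_coe]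
    rw [← EReal.coe_toReal hx (hPbot x), ← EReal.coe_add]
    exact le_top
  · have hsy := hsub y
    rw [← EReal.coe_toReal hy (hPbot y), EReal.coe_le_coe_iff] at hsy
    rw [← EReal.coe_toReal hx (hPbot x), ← EReal.coe_toReal hy (hPbot y),
      ← EReal.coe_add, ← EReal.coe_add, EReal.coe_le_coe_iff]
    have hexp : ‖y - (x + u)‖^2 = ‖y - x‖^2 - 2 * ⟪y - x, u⟫ + ‖u‖^2 := by
      have : y - (x + u) = (y - x) - u := by abel
      rw [this, norm_sub_sq_real]
    have hcomm : ⟪y - x, u⟫ = ⟪u, y - x⟫ := real_inner_comm _ _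
    rw [hxz, hexp, hcomm, norm_neg]
    nlinarith [sq_nonneg ‖y - x‖]

set_option maxHeartbeats 2000000 in
/-- The Luo-Tseng error bound plus separation of stationary values
implies that `f = h + P` is a KL function with exponent `1/2`. -/
theorem stmt_10 {n : ℕ} (h : EuclideanSpace ℝ (Fin n) → EReal)
    (hhproper : ProperFn h) (hhclosed : LowerSemicontinuous h)
    (hopen : IsOpen (edomain h))
    (h' : EuclideanSpace ℝ (Fin n) → EuclideanSpace ℝ (Fin n))
    (hgrad : ∀ x ∈ edomain h, HasGradientAt (fun y => (h y).toReal) (h' x) x)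
    (hgradcont : ContinuousOn h' (edomain h))
    (hgradlip : ∀ x ∈ edomain h, ∃ ε > (0:ℝ), ∃ L : NNReal,
      LipschitzOnWith L h' (Metric.ball x ε ∩ edomain h))
    (P : EuclideanSpace ℝ (Fin n) → EReal)
    (hPproper : ProperFn P) (hPclosed : LowerSemicontinuous P) (hPconv : EConvex P)
    (hcap : (edomain h ∩ edomain P).Nonempty)
    (f : EuclideanSpace ℝ (Fin n) → EReal) (hf : ∀ x, f x = h x + P x)
    (X : Set (EuclideanSpace ℝ (Fin n))) (hX : X = {x | (0 : EuclideanSpace ℝ (Fin n)) ∈ limSubdiff f x})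
    (hXne : X.Nonempty)
    (hsep : ∀ xbar ∈ X, ∃ δ > (0:ℝ), ∀ y ∈ X, ‖y - xbar‖ ≤ δ → f y = f xbar)
    (hLT : ∀ ζ : ℝ, (⨅ x, f x) ≤ (ζ : EReal) → ∃ c > (0:ℝ), ∃ ε > (0:ℝ),
      ∀ x : EuclideanSpace ℝ (Fin n), ∀ w : EuclideanSpace ℝ (Fin n),
        IsProxPt P (x - h' x) w → ‖w - x‖ < ε → f x ≤ (ζ : EReal) →
          infDist x X ≤ c * ‖w - x‖) :
    IsKL f (1/2) := by
  have hfbot : ∀ z, f z ≠ ⊥ := by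
    intro z hz
    rw [hf z, EReal.add_eq_bot_iff] at hz
    exact hz.elim (hhproper.1 z) (hPproper.1 z)
  intro xbar hxbar
  by_cases hmem : xbar ∈ X
  swap
  · exact KLAt_of_not_stationary hfbot hxbar (by rw [hX] at hmem; exact hmem)
  -- hard case
  have hstat : (0 : EuclideanSpace ℝ (Fin n)) ∈ limSubdiff f xbar := by rw [hX] at hmem; exact hmem
  have hftop : f xbar < ⊤ := hstat.1
  set r := (f xbar).toReal with hr
  have hfc : f xbar = (r : EReal) := (EReal.coe_toReal (ne_of_lt hftop) (hfbot xbar)).symm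
  have hparts := add_lt_top_parts (hhproper.1 xbar) (hPproper.1 xbar) ((hf xbar) ▸ hftop)
  have hxbardom : xbar ∈ edomain h := lt_of_le_of_ne le_top hparts.1
  obtain ⟨δ, hδpos, hδprop⟩ := hsep xbar hmem
  obtain ⟨ε₁, hε₁pos, L, hlip⟩ := hgradlip xbar hxbardom
  obtain ⟨ρ₂, hρ₂pos, hball₂⟩ := Metric.isOpen_iff.1 hopen xbar hxbardom
  set ρ := min ε₁ ρ₂ with hρ
  have hρpos : 0 < ρ := lt_min hε₁pos hρ₂pos
  have hball : Metric.ball xbar ρ ⊆ edomain h :=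
    subset_trans (Metric.ball_subset_ball (min_le_right _ _)) hball₂
  have hlip' : LipschitzOnWith L h' (Metric.ball xbar ρ) := by
    refine hlip.mono ?_
    intro z hz
    exact ⟨Metric.ball_subset_ball (min_le_left _ _) hz, hball hz⟩
  set ζ := r + 1 with hζ
  have hinf : (⨅ x, f x) ≤ ((ζ : ℝ) : EReal) := by
    refine le_trans (iInf_le f xbar) ?_
    rw [hfc]
    exact_mod_cast (by linarith : r ≤ ζ)
  obtain ⟨c, hcpos, ε, hεpos, hLTprop⟩ := hLT ζ hinf
  set ε' := min ε (min (δ/(4*c+1)) (ρ/(4*c+1))) with hε'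
  have hε'pos : 0 < ε' := by
    refine lt_min hεpos (lt_min ?_ ?_) <;> positivity
  set ε₀ := min (δ/2) (ρ/2) with hε₀
  have hε₀pos : 0 < ε₀ := lt_min (by positivity) (by positivity)
  set K := 2*c + 4*c^2*((L:ℝ)) + 1 with hK
  have hK1 : 1 ≤ K := by
    have h4 : 0 ≤ 4*c^2*((L:ℝ)) := by positivity
    have h2c : 0 ≤ 2*c := by linarith only [hcpos]
    rw [hK]; linarith only [h4, h2c]
  have hKpos : 0 < K := by linarith
  have hsqKpos : 0 < Real.sqrt K := Real.sqrt_pos.2 hKpos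
  set cKL := min ε' (Real.sqrt K)⁻¹ with hcKL
  have hcKLpos : 0 < cKL := lt_min hε'pos (by positivity)
  refine ⟨cKL, hcKLpos, ε₀, hε₀pos, (1 : EReal), by norm_num, ?_⟩
  intro x hx1 hx2 hx3
  have h1c : (1 : EReal) = ((1:ℝ) : EReal) := rfl
  have hxtop : f x < ⊤ := by
    refine lt_of_lt_of_le hx3 ?_
    rw [hfc, h1c, ← EReal.coe_add]
    exact le_top
  set a := (f x).toReal with ha
  have hfxc : f x = (a : EReal) := (EReal.coe_toReal (ne_of_lt hxtop) (hfbot x)).symm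
  set s := (f x - f xbar).toReal with hs
  have hseq : s = a - r :=
    EReal.toReal_sub (ne_of_lt hxtop) (hfbot x) (ne_of_lt hftop) (hfbot xbar)
  have hra : r < a := by
    have := hx2; rw [hfxc, hfc, EReal.coe_lt_coe_iff] at this; exact this
  have hs0 : 0 ≤ s := by rw [hseq]; linarith
  have hs1 : s ≤ 1 := by
    have := hx3
    rw [hfxc, hfc, h1c, ← EReal.coe_add, EReal.coe_lt_coe_iff] at this
    rw [hseq]; linarith
  have hpow1 : s ^ ((1:ℝ)/2) ≤ 1 := Real.rpow_le_one hs0 hs1 (by norm_num)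
  have hpow0 : 0 ≤ s ^ ((1:ℝ)/2) := Real.rpow_nonneg hs0 _
  refine Metric.le_infEDist.2 ?_
  intro v hv
  have hedist : edist (0 : EuclideanSpace ℝ (Fin n)) v = ENNReal.ofReal ‖v‖ := by
    rw [edist_dist, dist_eq_norm, zero_sub, norm_neg]
  rw [hedist]
  refine ENNReal.ofReal_le_ofReal ?_
  -- key goal : cKL * s ^ (1/2) ≤ ‖v‖
  have hxparts := add_lt_top_parts (hhproper.1 x) (hPproper.1 x) ((hf x) ▸ hxtop)
  have hxdom : x ∈ edomain h := lt_of_le_of_ne le_top hxparts.1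
  have hPxtop : P x ≠ ⊤ := hxparts.2
  by_cases hbig : ε' ≤ ‖v‖
  · calc cKL * s ^ ((1:ℝ)/2) ≤ cKL * 1 := mul_le_mul_of_nonneg_left hpow1 hcKLpos.le
      _ = cKL := mul_one _
      _ ≤ ε' := min_le_left _ _
      _ ≤ ‖v‖ := hbig
  push_neg at hbig
  -- v small case
  have hsub := limSubdiff_subgrad_s10 hf hhproper.1 hPproper.1 hopen hgrad hgradcont hPconv hv
  have hvne : v ≠ 0 := by
    intro hv0
    have hxX : x ∈ X := by
      rw [hX]; rw [hv0] at hv; exact hv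
    have : f x = f xbar := by
      refine hδprop x hxX ?_
      refine le_trans hx1 ?_
      calc ε₀ ≤ δ/2 := min_le_left _ _
        _ ≤ δ := by linarith
    rw [this] at hx2
    exact absurd hx2 (lt_irrefl _)
  have hvpos : 0 < ‖v‖ := norm_pos_iff.2 hvne
  set u := v - h' x with hu
  obtain ⟨w, hw⟩ := prox_exists_s10 hPproper.1 hPclosed hPxtop hsub (x - h' x)
  have hself : IsProxPt P (x + u) x := isProxPt_self hPproper.1 hPxtop hsub
  have hwx : ‖w - x‖ ≤ ‖v‖ := by
    have := prox_nonexpansive hPproper.1 hPconv hPxtop hw hself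
    have heq : (x - h' x) - (x + u) = -v := by rw [hu]; abel
    rwa [heq, norm_neg] at this
  have hfxζ : f x ≤ ((ζ : ℝ) : EReal) := by
    rw [hfxc]
    have : a < ζ := by
      have := hx3
      rw [hfxc, hfc, h1c, ← EReal.coe_add, EReal.coe_lt_coe_iff] at this
      rw [hζ]; linarith
    exact_mod_cast this.le
  have hinfd : infDist x X ≤ c * ‖w - x‖ :=
    hLTprop x w hw (lt_of_le_of_lt hwx (lt_of_lt_of_le hbig (min_le_left _ _))) hfxζ
  have hinfd2 : infDist x X < 2 * c * ‖v‖ := by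
    refine lt_of_le_of_lt hinfd ?_
    have e1 : c * ‖w - x‖ ≤ c * ‖v‖ := mul_le_mul_of_nonneg_left hwx hcpos.le
    have e2 : 0 < c * ‖v‖ := mul_pos hcpos hvpos
    linarith only [e1, e2]
  obtain ⟨xhat, hxhatX, hxhatd⟩ := (Metric.infDist_lt_iff hXne).1 hinfd2
  have hxhatn : ‖xhat - x‖ < 2 * c * ‖v‖ := by
    rw [dist_eq_norm, norm_sub_rev] at hxhatd; exact hxhatd
  have hvδ : ‖v‖ < δ/(4*c+1) := lt_of_lt_of_le hbig (le_trans (min_le_right _ _) (min_le_left _ _))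
  have hvρ : ‖v‖ < ρ/(4*c+1) := lt_of_lt_of_le hbig (le_trans (min_le_right _ _) (min_le_right _ _))
  have hxε₀ : ‖x - xbar‖ ≤ ε₀ := hx1
  have hxhatbar : ‖xhat - xbar‖ ≤ δ := by
    have htri : ‖xhat - xbar‖ ≤ ‖xhat - x‖ + ‖x - xbar‖ := by
      have := norm_add_le (xhat - x) (x - xbar)
      rwa [sub_add_sub_cancel] at this
    have h1 : ‖x - xbar‖ ≤ δ/2 := le_trans hxε₀ (min_le_left _ _)
    have h2 : 2 * c * ‖v‖ ≤ δ/2 := by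
      rw [lt_div_iff₀ (by positivity : (0:ℝ) < 4*c+1)] at hvδ
      linarith only [hvδ, norm_nonneg v]
    linarith
  have hfxhat : f xhat = f xbar := hδprop xhat hxhatX hxhatbar
  have hxball : x ∈ Metric.ball xbar ρ := by
    rw [Metric.mem_ball, dist_eq_norm]
    refine lt_of_le_of_lt (le_trans hxε₀ (min_le_right _ _)) (by linarith)
  have hxhatball : xhat ∈ Metric.ball xbar ρ := by
    rw [Metric.mem_ball, dist_eq_norm]
    have htri : ‖xhat - xbar‖ ≤ ‖xhat - x‖ + ‖x - xbar‖ := by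
      have := norm_add_le (xhat - x) (x - xbar)
      rwa [sub_add_sub_cancel] at this
    have h1 : ‖x - xbar‖ ≤ ρ/2 := le_trans hxε₀ (min_le_right _ _)
    have h2 : 2 * c * ‖v‖ < ρ/2 := by
      rw [lt_div_iff₀ (by positivity : (0:ℝ) < 4*c+1)] at hvρ
      linarith only [hvρ, norm_nonneg v]
    linarith
  -- descent lemma
  have hdesc := descent_lemma (convex_ball xbar ρ) (fun z hz => hgrad z (hball hz))
    hlip' hxball hxhatball
  -- P subgradient at xhat
  have hfxhattop : f xhat < ⊤ := by rw [hfxhat]; exact hftop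
  have hxhparts := add_lt_top_parts (hhproper.1 xhat) (hPproper.1 xhat) ((hf xhat) ▸ hfxhattop)
  have hPsub := hsub xhat
  rw [← EReal.coe_toReal hxhparts.2 (hPproper.1 xhat), EReal.coe_le_coe_iff] at hPsub
  -- real decompositions
  have hax : a = (h x).toReal + (P x).toReal := by
    rw [ha, hf x, EReal.toReal_add hxparts.1 (hhproper.1 x) hxparts.2 (hPproper.1 x)]
  have hrx : r = (h xhat).toReal + (P xhat).toReal := by
    rw [hr, ← hfxhat, hf xhat,
      EReal.toReal_add hxhparts.1 (hhproper.1 xhat) hxhparts.2 (hPproper.1 xhat)]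
  -- combine
  have hinner_split : ⟪h' x, xhat - x⟫ + ⟪u, xhat - x⟫ = ⟪v, xhat - x⟫ := by
    rw [hu, ← inner_add_left]
    congr 1
    abel
  have hcs : |⟪v, xhat - x⟫| ≤ ‖v‖ * ‖xhat - x‖ := abs_real_inner_le_norm _ _
  have hskey : s ≤ K * ‖v‖^2 := by
    rw [hseq, hax, hrx]
    have habs := abs_le.1 hdesc
    have habs2 := abs_le.1 hcs
    have hn1 : ‖xhat - x‖ ≤ 2*c*‖v‖ := hxhatn.le
    have hLnn := NNReal.coe_nonneg L
    have e1 : (h x).toReal - (h xhat).toReal ≤ -⟪h' x, xhat - x⟫ + (L:ℝ)*‖xhat - x‖^2 := by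
      linarith only [habs.1]
    have e2 : (P x).toReal - (P xhat).toReal ≤ -⟪u, xhat - x⟫ := by linarith only [hPsub]
    have e3 : -⟪v, xhat - x⟫ ≤ ‖v‖ * ‖xhat - x‖ := by linarith only [habs2.1]
    have e4 : -⟪h' x, xhat - x⟫ + (-⟪u, xhat - x⟫) = -⟪v, xhat - x⟫ := by
      rw [← hinner_split]; ring
    have hd2 : ‖v‖ * ‖xhat - x‖ ≤ 2*c*‖v‖^2 := by
      have := mul_le_mul_of_nonneg_left hn1 (norm_nonneg v)
      calc ‖v‖ * ‖xhat - x‖ ≤ ‖v‖ * (2*c*‖v‖) := this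
        _ = 2*c*‖v‖^2 := by ring
    have hd3 : (L:ℝ)*‖xhat - x‖^2 ≤ 4*c^2*(L:ℝ)*‖v‖^2 := by
      have hsq : ‖xhat - x‖^2 ≤ (2*c*‖v‖)^2 := by
        have := pow_le_pow_left₀ (norm_nonneg (xhat - x)) hn1 2
        exact this
      have := mul_le_mul_of_nonneg_left hsq hLnn
      calc (L:ℝ)*‖xhat - x‖^2 ≤ (L:ℝ)*(2*c*‖v‖)^2 := this
        _ = 4*c^2*(L:ℝ)*‖v‖^2 := by ring
    have hvsq : 0 ≤ ‖v‖^2 := sq_nonneg _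
    have hKexp : K * ‖v‖^2 = 2*c*‖v‖^2 + 4*c^2*(L:ℝ)*‖v‖^2 + ‖v‖^2 := by rw [hK]; ring
    rw [hKexp]
    linarith only [e1, e2, e3, e4, hd2, hd3, hvsq]
  -- finish
  have hsqrt : Real.sqrt s ≤ Real.sqrt K * ‖v‖ := by
    refine le_trans (Real.sqrt_le_sqrt hskey) ?_
    rw [Real.sqrt_mul hKpos.le, Real.sqrt_sq (norm_nonneg v)]
  have hrpow : s ^ ((1:ℝ)/2) = Real.sqrt s := (Real.sqrt_eq_rpow s).symm
  rw [hrpow]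
  calc cKL * Real.sqrt s ≤ (Real.sqrt K)⁻¹ * (Real.sqrt K * ‖v‖) :=
        mul_le_mul (min_le_right _ _) hsqrt (Real.sqrt_nonneg _) (by positivity)
    _ = ‖v‖ := by
        rw [← mul_assoc, inv_mul_cancel₀ (ne_of_gt hsqKpos), one_mul]

end
end
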